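/- arXiv:2509.00694 — 4 statements merged into one kernel-verified Lean document; each statement's English description precedes it below -/
import Mathlib

section
/- Under the standing assumptions, ∫_ℝ |ℓ|·‖φ_ℓ‖_{L^∞_y([-1,1])} dℓ ≲ 𝓓₄^{1/2}. (Second estimate of Lemma 3.1.) -/
open MeasureTheory Set Filter Topology
open scoped ENNReal

noncomputable section

/-- `L²` norm over `y ∈ [-1,1]`. -/
def L2y (f : ℝ → ℂ) : ℝ := (∫ y in Set.Icc (-1 : ℝ) 1, ‖f y‖ ^ 2) ^ ((1 : ℝ) / 2)

/-- `L^∞` norm over `y ∈ [-1,1]`. -/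
def Linfy (f : ℝ → ℂ) : ℝ := ⨆ y : Set.Icc (-1 : ℝ) 1, ‖f (y : ℝ)‖

/-- `L²([-1,1])` inner product `⟨f,g⟩ = ∫ conj (f y) * g y dy`. -/
def ipy (f g : ℝ → ℂ) : ℂ :=
  ∫ y in Set.Icc (-1 : ℝ) 1, (starRingEnd ℂ) (f y) * g y

/-- The rate `λ_k`. -/
def lamf (ν k : ℝ) : ℝ :=
  if ν ≤ |k| then ν ^ ((1 : ℝ) / 3) * |k| ^ ((2 : ℝ) / 3) else ν

/-- The weight `α(k)`. -/
def alphf (ν k : ℝ) : ℝ :=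
  if ν ≤ |k| then ν ^ ((2 : ℝ) / 3) * |k| ^ (-((2 : ℝ) / 3)) else 1

/-- The weight `β(k)`. -/
def betaf (ν k : ℝ) : ℝ :=
  if ν ≤ |k| then ν ^ ((1 : ℝ) / 3) * |k| ^ (-((4 : ℝ) / 3)) else 0

/-- The frequency weight `W(k) = e^{2cλ_k t}⟨k⟩^{2m}⟨k⁻¹⟩^{2ε}`. -/
def Wf (ν m ε c t k : ℝ) : ℝ :=
  Real.exp (2 * c * lamf ν k * t) * (1 + k ^ 2) ^ m * (1 + k⁻¹ ^ 2) ^ ε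

/-- `‖∇_k f‖²_{L²} = k²‖f‖²_{L²} + ‖∂_y f‖²_{L²}` (with `df = ∂_y f`). -/
def gradSq (k : ℝ) (f df : ℝ → ℂ) : ℝ :=
  k ^ 2 * (L2y f) ^ 2 + (L2y df) ^ 2

/-- The weighted energy `𝓔`. -/
def EEn (ν m ε c t : ℝ) (ω dω : ℝ → ℝ → ℂ) : ℝ≥0∞ :=
  ∫⁻ k : ℝ, ENNReal.ofReal
    (Wf ν m ε c t k * ((L2y (ω k)) ^ 2 + alphf ν k * (L2y (dω k)) ^ 2))

/-- The dissipation functional `𝓓₁`. -/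
def D1n (ν m ε c t : ℝ) (ω dω : ℝ → ℝ → ℂ) : ℝ≥0∞ :=
  ∫⁻ k : ℝ, ENNReal.ofReal (Wf ν m ε c t k * (ν * gradSq k (ω k) (dω k)))

/-- The dissipation functional `𝓓₂`. -/
def D2n (ν m ε c t : ℝ) (dω d2ω : ℝ → ℝ → ℂ) : ℝ≥0∞ :=
  ∫⁻ k : ℝ, ENNReal.ofReal (Wf ν m ε c t k * (ν * alphf ν k * gradSq k (dω k) (d2ω k)))

/-- The dissipation functional `𝓓₃`. -/
def D3n (ν m ε c t : ℝ) (ω : ℝ → ℝ → ℂ) : ℝ≥0∞ :=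
  ∫⁻ k : ℝ, ENNReal.ofReal (Wf ν m ε c t k * (lamf ν k * (L2y (ω k)) ^ 2))

/-- The dissipation functional `𝓓₄`. -/
def D4n (ν m ε c t : ℝ) (φ dφ : ℝ → ℝ → ℂ) : ℝ≥0∞ :=
  ∫⁻ k : ℝ, ENNReal.ofReal (Wf ν m ε c t k * (k ^ 2 * gradSq k (φ k) (dφ k)))

/-- The dissipation functional `𝓓₅`. -/
def D5n (ν m ε c t : ℝ) (dφ d2φ : ℝ → ℝ → ℂ) : ℝ≥0∞ :=
  ∫⁻ k : ℝ, ENNReal.ofReal (Wf ν m ε c t k * (alphf ν k * k ^ 2 * gradSq k (dφ k) (d2φ k)))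

section Aux

lemma volume_Icc_ne_top : MeasureTheory.volume (Set.Icc (-1:ℝ) 1) ≠ ⊤ := by
  simp [Real.volume_Icc]

lemma finIcc : MeasureTheory.IsFiniteMeasure
    (MeasureTheory.volume.restrict (Set.Icc (-1:ℝ) 1)) := by
  constructor
  rw [MeasureTheory.Measure.restrict_apply_univ]
  simp [Real.volume_Icc]

/-- Cauchy–Schwarz: `∫ h ≤ √2 √(∫ h²)` on `[-1,1]` for nonnegative `h`. -/
lemma cs_aux {h : ℝ → ℝ} (hpos : ∀ y, 0 ≤ h y)
    (hint : MeasureTheory.IntegrableOn h (Set.Icc (-1:ℝ) 1))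
    (hint2 : MeasureTheory.IntegrableOn (fun y => h y ^ 2) (Set.Icc (-1:ℝ) 1)) :
    (∫ y in Set.Icc (-1:ℝ) 1, h y) ≤
      Real.sqrt 2 * Real.sqrt (∫ y in Set.Icc (-1:ℝ) 1, h y ^ 2) := by
  haveI := finIcc
  set I1 := ∫ y in Set.Icc (-1:ℝ) 1, h y with hI1
  set I2 := ∫ y in Set.Icc (-1:ℝ) 1, h y ^ 2 with hI2
  have hμ : (MeasureTheory.volume.restrict (Set.Icc (-1:ℝ) 1)) Set.univ = ENNReal.ofReal 2 := by
    rw [MeasureTheory.Measure.restrict_apply_univ]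
    rw [Real.volume_Icc]; norm_num
  have h0 : 0 ≤ ∫ y in Set.Icc (-1:ℝ) 1, (h y - I1/2)^2 :=
    MeasureTheory.integral_nonneg fun y => sq_nonneg _
  have hexp : (∫ y in Set.Icc (-1:ℝ) 1, (h y - I1/2)^2)
      = I2 - I1 * I1 + (I1/2)^2 * 2 := by
    have hrw : (fun y => (h y - I1/2)^2) = fun y => (h y ^ 2 - I1 * h y) + (I1/2)^2 := by
      funext y; ring
    have hfint : MeasureTheory.Integrable (fun y => h y ^ 2 - I1 * h y)
        (MeasureTheory.volume.restrict (Set.Icc (-1:ℝ) 1)) := hint2.sub (hint.const_mul I1)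
    have hgint : MeasureTheory.Integrable (fun x => I1 * h x)
        (MeasureTheory.volume.restrict (Set.Icc (-1:ℝ) 1)) := hint.const_mul I1
    rw [hrw, MeasureTheory.integral_add hfint (MeasureTheory.integrable_const _),
      MeasureTheory.integral_sub hint2 hgint,
      MeasureTheory.integral_const_mul, MeasureTheory.integral_const,
      MeasureTheory.measureReal_def, hμ]
    rw [← hI1, ← hI2]
    rw [ENNReal.toReal_ofReal (by norm_num : (0:ℝ) ≤ 2)]
    simp only [smul_eq_mul]
    ring
  have hI1nonneg : 0 ≤ I1 := MeasureTheory.integral_nonneg fun y => hpos y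
  have hkey : I1 ^ 2 ≤ 2 * I2 := by nlinarith [h0, hexp]
  calc I1 = Real.sqrt (I1 ^ 2) := (Real.sqrt_sq hI1nonneg).symm
    _ ≤ Real.sqrt (2 * I2) := Real.sqrt_le_sqrt hkey
    _ = Real.sqrt 2 * Real.sqrt I2 := Real.sqrt_mul (by norm_num) _

end Aux

section Aux2

/-- Continuity of an interval primitive on `[-1,1]`. -/
lemma prim_cont {g : ℝ → ℂ} (hg : MeasureTheory.IntegrableOn g (Set.Icc (-1:ℝ) 1)) :
    ContinuousOn (fun y => ∫ s in (-1:ℝ)..y, g s) (Set.Icc (-1:ℝ) 1) := by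
  have hIcc : Set.uIcc (-1:ℝ) 1 = Set.Icc (-1:ℝ) 1 := Set.uIcc_of_le (by norm_num)
  have := intervalIntegral.continuousOn_primitive_interval
    (μ := MeasureTheory.volume) (a := (-1:ℝ)) (b := 1) (f := g) (by rwa [hIcc])
  rwa [hIcc] at this

/-- Bootstrap: the vorticity `ω_k` is integrable on `[-1,1]`. -/
lemma omega_integrable {ωk dωk d2ωk : ℝ → ℂ}
    (hωFTC : ∀ y ∈ Set.Icc (-1:ℝ) 1, ωk y = ωk (-1) + ∫ s in (-1:ℝ)..y, dωk s)
    (hdωFTC : ∀ y ∈ Set.Icc (-1:ℝ) 1, dωk y = dωk (-1) + ∫ s in (-1:ℝ)..y, d2ωk s)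
    (hmem : MeasureTheory.MemLp d2ωk 2 (MeasureTheory.volume.restrict (Set.Icc (-1:ℝ) 1))) :
    MeasureTheory.IntegrableOn ωk (Set.Icc (-1:ℝ) 1) := by
  haveI := finIcc
  have hd2 : MeasureTheory.IntegrableOn d2ωk (Set.Icc (-1:ℝ) 1) :=
    hmem.integrable (by norm_num)
  have hdωcont : ContinuousOn dωk (Set.Icc (-1:ℝ) 1) :=
    (continuousOn_const.add (prim_cont hd2)).congr hdωFTC
  have hωcont : ContinuousOn ωk (Set.Icc (-1:ℝ) 1) :=
    (continuousOn_const.add (prim_cont hdωcont.integrableOn_Icc)).congr hωFTC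
  exact hωcont.integrableOn_Icc

/-- The key pointwise-in-`k` estimate: `‖φ_k‖_∞ ≤ √2 ‖∂_y φ_k‖_{L²}`. -/
lemma key_bound (k : ℝ) (φk dφk d2φk ωk : ℝ → ℂ)
    (hφm : Measurable φk)
    (hωint : MeasureTheory.IntegrableOn ωk (Set.Icc (-1:ℝ) 1))
    (hφ0 : φk (-1) = 0)
    (hφFTC : ∀ y ∈ Set.Icc (-1:ℝ) 1, φk y = φk (-1) + ∫ s in (-1:ℝ)..y, dφk s)
    (hdφFTC : ∀ y ∈ Set.Icc (-1:ℝ) 1, dφk y = dφk (-1) + ∫ s in (-1:ℝ)..y, d2φk s)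
    (heq : ∀ y ∈ Set.Icc (-1:ℝ) 1, d2φk y - (k:ℂ) ^ 2 * φk y = ωk y) :
    Linfy φk ≤ Real.sqrt 2 * L2y dφk := by
  have hL2nonneg : 0 ≤ L2y dφk :=
    Real.rpow_nonneg (MeasureTheory.integral_nonneg fun y => by positivity) _
  have hRHS : 0 ≤ Real.sqrt 2 * L2y dφk := mul_nonneg (Real.sqrt_nonneg 2) hL2nonneg
  by_cases hB : BddAbove (Set.range fun y : Set.Icc (-1:ℝ) 1 => ‖φk (y:ℝ)‖)
  swap
  · rw [Linfy, Real.iSup_of_not_bddAbove hB]; exact hRHS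
  obtain ⟨M, hM⟩ := hB
  have hφint : MeasureTheory.IntegrableOn φk (Set.Icc (-1:ℝ) 1) := by
    apply MeasureTheory.Measure.integrableOn_of_bounded (M := M) volume_Icc_ne_top
      hφm.aestronglyMeasurable
    rw [MeasureTheory.ae_restrict_iff' measurableSet_Icc]
    exact MeasureTheory.ae_of_all _ fun y hy => hM ⟨⟨y, hy⟩, rfl⟩
  have hd2φint : MeasureTheory.IntegrableOn d2φk (Set.Icc (-1:ℝ) 1) := by
    have hsum : MeasureTheory.IntegrableOn (fun y => ωk y + (k:ℂ) ^ 2 * φk y)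
        (Set.Icc (-1:ℝ) 1) := hωint.add (hφint.const_mul ((k:ℂ) ^ 2))
    exact MeasureTheory.IntegrableOn.congr_fun hsum
      (fun y hy => (sub_eq_iff_eq_add.mp (heq y hy)).symm) measurableSet_Icc
  have hIcc : Set.uIcc (-1:ℝ) 1 = Set.Icc (-1:ℝ) 1 := Set.uIcc_of_le (by norm_num)
  have hdφcont : ContinuousOn dφk (Set.Icc (-1:ℝ) 1) :=
    (continuousOn_const.add (prim_cont hd2φint)).congr hdφFTC
  have hdφII : IntervalIntegrable dφk MeasureTheory.volume (-1) 1 := by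
    apply ContinuousOn.intervalIntegrable; rwa [hIcc]
  have hnormint : MeasureTheory.IntegrableOn (fun y => ‖dφk y‖) (Set.Icc (-1:ℝ) 1) :=
    hdφcont.norm.integrableOn_Icc
  have hsqint : MeasureTheory.IntegrableOn (fun y => ‖dφk y‖ ^ 2) (Set.Icc (-1:ℝ) 1) :=
    (hdφcont.norm.pow 2).integrableOn_Icc
  have hbd : ∀ y ∈ Set.Icc (-1:ℝ) 1, ‖φk y‖ ≤ Real.sqrt 2 * L2y dφk := by
    intro y hy
    have h1 : φk y = ∫ s in (-1:ℝ)..y, dφk s := by rw [hφFTC y hy, hφ0, zero_add]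
    calc ‖φk y‖ = ‖∫ s in (-1:ℝ)..y, dφk s‖ := by rw [h1]
      _ ≤ ∫ s in (-1:ℝ)..y, ‖dφk s‖ :=
          intervalIntegral.norm_integral_le_integral_norm hy.1
      _ ≤ ∫ s in (-1:ℝ)..1, ‖dφk s‖ :=
          intervalIntegral.integral_mono_interval le_rfl hy.1 hy.2
            (MeasureTheory.ae_of_all _ fun s => norm_nonneg _) hdφII.norm
      _ = ∫ s in Set.Icc (-1:ℝ) 1, ‖dφk s‖ := by
          rw [intervalIntegral.integral_of_le (by norm_num : (-1:ℝ) ≤ 1),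
            ← MeasureTheory.integral_Icc_eq_integral_Ioc]
      _ ≤ Real.sqrt 2 * Real.sqrt (∫ s in Set.Icc (-1:ℝ) 1, ‖dφk s‖ ^ 2) :=
          cs_aux (fun s => norm_nonneg _) hnormint hsqint
      _ = Real.sqrt 2 * L2y dφk := by rw [L2y, ← Real.sqrt_eq_rpow]
  exact Real.iSup_le (fun y => hbd y y.2) hRHS

end Aux2

section Aux3

lemma lamf_nonneg {ν : ℝ} (hν : 0 ≤ ν) (k : ℝ) : 0 ≤ lamf ν k := by
  unfold lamf
  split
  · exact mul_nonneg (Real.rpow_nonneg hν _) (Real.rpow_nonneg (abs_nonneg _) _)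
  · exact hν

lemma Wf_pos (ν m ε c t k : ℝ) : 0 < Wf ν m ε c t k := by
  unfold Wf
  have h1 : (0:ℝ) < 1 + k ^ 2 := by positivity
  have h2 : (0:ℝ) < 1 + k⁻¹ ^ 2 := by positivity
  exact mul_pos (mul_pos (Real.exp_pos _) (Real.rpow_pos_of_pos h1 m)) (Real.rpow_pos_of_pos h2 ε)

lemma Wf_ge {ν m ε c t : ℝ} (hν : 0 < ν) (hm : 1 ≤ m) (hε : 0 ≤ ε) (hc : 0 ≤ c) (ht : 0 ≤ t)
    (k : ℝ) : 1 + k ^ 2 ≤ Wf ν m ε c t k := by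
  unfold Wf
  have hexp1 : (1:ℝ) ≤ Real.exp (2 * c * lamf ν k * t) := by
    rw [← Real.exp_zero]
    apply Real.exp_le_exp.2
    have := lamf_nonneg hν.le k
    positivity
  have hb1 : (1:ℝ) ≤ 1 + k ^ 2 := by nlinarith [sq_nonneg k]
  have hb2 : (1:ℝ) ≤ 1 + k⁻¹ ^ 2 := by nlinarith [sq_nonneg k⁻¹]
  have h2 : 1 + k ^ 2 ≤ (1 + k ^ 2) ^ m := by
    calc 1 + k ^ 2 = (1 + k ^ 2) ^ (1:ℝ) := (Real.rpow_one _).symm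
      _ ≤ (1 + k ^ 2) ^ m := Real.rpow_le_rpow_of_exponent_le hb1 hm
  have h3 : (1:ℝ) ≤ (1 + k⁻¹ ^ 2) ^ ε := by
    calc (1:ℝ) = (1 + k⁻¹ ^ 2) ^ (0:ℝ) := (Real.rpow_zero _).symm
      _ ≤ (1 + k⁻¹ ^ 2) ^ ε := Real.rpow_le_rpow_of_exponent_le hb2 hε
  have hBpos : (0:ℝ) < (1 + k ^ 2) ^ m := Real.rpow_pos_of_pos (by positivity) m
  calc 1 + k ^ 2 ≤ (1 + k ^ 2) ^ m := h2
    _ = 1 * (1 + k ^ 2) ^ m * 1 := by ring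
    _ ≤ Real.exp (2 * c * lamf ν k * t) * (1 + k ^ 2) ^ m * (1 + k⁻¹ ^ 2) ^ ε := by
        apply mul_le_mul (mul_le_mul hexp1 le_rfl hBpos.le (le_trans zero_le_one hexp1)) h3
          zero_le_one
        positivity

lemma measurable_Wf (ν m ε c t : ℝ) : Measurable fun k => Wf ν m ε c t k := by
  have hlam : Measurable fun k : ℝ => lamf ν k := by
    unfold lamf
    apply Measurable.ite (measurableSet_le measurable_const measurable_abs)
    · exact measurable_const.mul (measurable_abs.pow measurable_const)
    · exact measurable_const
  unfold Wf
  apply Measurable.mul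
  apply Measurable.mul
  · exact Real.measurable_exp.comp ((measurable_const.mul hlam).mul measurable_const)
  · exact (measurable_const.add (measurable_id.pow measurable_const)).pow measurable_const
  · exact (measurable_const.add (measurable_inv.pow measurable_const)).pow measurable_const

lemma measurable_L2y {ψ : ℝ → ℝ → ℂ} (hψ : Measurable (Function.uncurry ψ)) :
    Measurable fun l => L2y (ψ l) := by
  unfold L2y
  have h1 : MeasureTheory.StronglyMeasurable fun p : ℝ × ℝ => ‖Function.uncurry ψ p‖ ^ 2 :=
    (hψ.norm.pow measurable_const).stronglyMeasurable
  have h2 : MeasureTheory.StronglyMeasurable fun l : ℝ =>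
      ∫ y, ‖ψ l y‖ ^ 2 ∂(MeasureTheory.volume.restrict (Set.Icc (-1:ℝ) 1)) :=
    h1.integral_prod_right'
  exact h2.measurable.pow measurable_const

lemma measurable_section {ψ : ℝ → ℝ → ℂ} (hψ : Measurable (Function.uncurry ψ)) (k : ℝ) :
    Measurable (ψ k) := hψ.comp measurable_prodMk_left

end Aux3


theorem lemma31_second (m ε : ℝ) (hm : 1 < m) (hε : ε ∈ Set.Ioo (0 : ℝ) (1 / 12)) :
    ∃ C : ℝ, 0 < C ∧
      ∀ (ν c t : ℝ), ν ∈ Set.Ioo (0 : ℝ) 1 → 0 < c → 0 ≤ t →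
      ∀ (ω dω d2ω φ dφ d2φ : ℝ → ℝ → ℂ),
      Measurable (Function.uncurry ω) → Measurable (Function.uncurry dω) →
      Measurable (Function.uncurry d2ω) → Measurable (Function.uncurry φ) →
      Measurable (Function.uncurry dφ) → Measurable (Function.uncurry d2φ) →
      (∀ k : ℝ, ω k (-1) = 0 ∧ ω k 1 = 0) →
      (∀ k : ℝ, ∀ y ∈ Set.Icc (-1 : ℝ) 1,
        ω k y = ω k (-1) + ∫ s in (-1 : ℝ)..y, dω k s) →
      (∀ k : ℝ, ∀ y ∈ Set.Icc (-1 : ℝ) 1,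
        dω k y = dω k (-1) + ∫ s in (-1 : ℝ)..y, d2ω k s) →
      (∀ k : ℝ, MemLp (d2ω k) 2 (volume.restrict (Set.Icc (-1 : ℝ) 1))) →
      (∀ k : ℝ, k ≠ 0 → φ k (-1) = 0 ∧ φ k 1 = 0) →
      (∀ k : ℝ, k ≠ 0 → ∀ y ∈ Set.Icc (-1 : ℝ) 1,
        φ k y = φ k (-1) + ∫ s in (-1 : ℝ)..y, dφ k s) →
      (∀ k : ℝ, k ≠ 0 → ∀ y ∈ Set.Icc (-1 : ℝ) 1,
        dφ k y = dφ k (-1) + ∫ s in (-1 : ℝ)..y, d2φ k s) →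
      (∀ k : ℝ, k ≠ 0 → ∀ y ∈ Set.Icc (-1 : ℝ) 1,
        d2φ k y - (k : ℂ) ^ 2 * φ k y = ω k y) →
      EEn ν m ε c t ω dω ≠ ⊤ → D1n ν m ε c t ω dω ≠ ⊤ → D2n ν m ε c t dω d2ω ≠ ⊤ →
      D3n ν m ε c t ω ≠ ⊤ → D4n ν m ε c t φ dφ ≠ ⊤ → D5n ν m ε c t dφ d2φ ≠ ⊤ →
      ∫⁻ l : ℝ, ENNReal.ofReal (|l| * Linfy (φ l)) ≤
        ENNReal.ofReal C * (D4n ν m ε c t φ dφ) ^ ((1 : ℝ) / 2) := by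
  refine ⟨Real.sqrt (2 * Real.pi), Real.sqrt_pos.2 (by positivity), ?_⟩
  intro ν c t hν hc ht ω dω d2ω φ dφ d2φ hωm hdωm hd2ωm hφm hdφm hd2φm hbcω hωFTC hdωFTC
    hd2ωL2 hbcφ hφFTC hdφFTC hpde hE hD1 hD2 hD3 hD4 hD5
  have hWpos : ∀ l, 0 < Wf ν m ε c t l := Wf_pos ν m ε c t
  have hWmeas : Measurable fun l => Wf ν m ε c t l := measurable_Wf ν m ε c t
  set F : ℝ → ℝ≥0∞ := fun l =>
    ENNReal.ofReal (Real.sqrt 2) * (ENNReal.ofReal (Wf ν m ε c t l))⁻¹ ^ ((1:ℝ)/2) with hF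
  set G : ℝ → ℝ≥0∞ := fun l =>
    ENNReal.ofReal (Wf ν m ε c t l * (l ^ 2 * gradSq l (φ l) (dφ l))) ^ ((1:ℝ)/2) with hG
  have hgradmeas : Measurable fun l => l ^ 2 * gradSq l (φ l) (dφ l) := by
    unfold gradSq
    exact (measurable_id.pow measurable_const).mul
      (((measurable_id.pow measurable_const).mul
        ((measurable_L2y hφm).pow measurable_const)).add
        ((measurable_L2y hdφm).pow measurable_const))
  have hFmeas : Measurable F :=
    measurable_const.mul ((hWmeas.ennreal_ofReal.inv).pow measurable_const)
  have hGmeas : Measurable G :=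
    ((hWmeas.mul hgradmeas).ennreal_ofReal).pow measurable_const
  have half_nonneg : (0:ℝ) ≤ 1/2 := by norm_num
  -- pointwise a.e. bound
  have hae : ∀ᵐ l : ℝ, ENNReal.ofReal (|l| * Linfy (φ l)) ≤ F l * G l := by
    have hne : ∀ᵐ l : ℝ, l ≠ 0 := by
      have hset : {l : ℝ | ¬ l ≠ 0} = {(0:ℝ)} := by ext l; simp
      rw [ae_iff, hset]
      exact measure_singleton 0
    filter_upwards [hne] with l hl
    -- the real inequality
    have hkey : Linfy (φ l) ≤ Real.sqrt 2 * L2y (dφ l) :=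
      key_bound l (φ l) (dφ l) (d2φ l) (ω l) (measurable_section hφm l)
        (omega_integrable (hωFTC l) (hdωFTC l) (hd2ωL2 l)) (hbcφ l hl).1
        (hφFTC l hl) (hdφFTC l hl) (hpde l hl)
    have hgs_nonneg : 0 ≤ gradSq l (φ l) (dφ l) := by
      unfold gradSq; positivity
    have hXnonneg : 0 ≤ l ^ 2 * gradSq l (φ l) (dφ l) := by positivity
    have hreal : |l| * Linfy (φ l) ≤
        Real.sqrt 2 * Real.sqrt (l ^ 2 * gradSq l (φ l) (dφ l)) := by
      have hL2dφ : 0 ≤ L2y (dφ l) :=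
        Real.rpow_nonneg (integral_nonneg fun y => by positivity) _
      calc |l| * Linfy (φ l) ≤ |l| * (Real.sqrt 2 * L2y (dφ l)) :=
            mul_le_mul_of_nonneg_left hkey (abs_nonneg l)
        _ = Real.sqrt 2 * (|l| * L2y (dφ l)) := by ring
        _ = Real.sqrt 2 * Real.sqrt (l ^ 2 * (L2y (dφ l)) ^ 2) := by
            rw [Real.sqrt_mul (sq_nonneg l), Real.sqrt_sq_eq_abs, Real.sqrt_sq hL2dφ]
        _ ≤ Real.sqrt 2 * Real.sqrt (l ^ 2 * gradSq l (φ l) (dφ l)) := by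
            apply mul_le_mul_of_nonneg_left (Real.sqrt_le_sqrt ?_) (Real.sqrt_nonneg 2)
            unfold gradSq
            nlinarith [mul_nonneg (mul_nonneg (sq_nonneg l) (sq_nonneg l))
              (sq_nonneg (L2y (φ l)))]
    -- ENNReal manipulation
    have hW0 : ENNReal.ofReal (Wf ν m ε c t l) ≠ 0 := (ENNReal.ofReal_pos.2 (hWpos l)).ne'
    have hWtop : ENNReal.ofReal (Wf ν m ε c t l) ≠ ⊤ := ENNReal.ofReal_ne_top
    have hcancel : (ENNReal.ofReal (Wf ν m ε c t l))⁻¹ ^ ((1:ℝ)/2) *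
        (ENNReal.ofReal (Wf ν m ε c t l)) ^ ((1:ℝ)/2) = 1 := by
      rw [← ENNReal.mul_rpow_of_nonneg _ _ half_nonneg, ENNReal.inv_mul_cancel hW0 hWtop,
        ENNReal.one_rpow]
    have hFG : F l * G l = ENNReal.ofReal (Real.sqrt 2) *
        ENNReal.ofReal (l ^ 2 * gradSq l (φ l) (dφ l)) ^ ((1:ℝ)/2) := by
      rw [hF, hG]
      simp only []
      rw [ENNReal.ofReal_mul (hWpos l).le,
        ENNReal.mul_rpow_of_nonneg _ _ half_nonneg, mul_assoc,
        ← mul_assoc ((ENNReal.ofReal (Wf ν m ε c t l))⁻¹ ^ ((1:ℝ)/2)), hcancel, one_mul]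
    rw [hFG, ENNReal.ofReal_rpow_of_nonneg hXnonneg half_nonneg,
      ← Real.sqrt_eq_rpow, ← ENNReal.ofReal_mul (Real.sqrt_nonneg 2)]
    exact ENNReal.ofReal_le_ofReal hreal
  -- Hölder
  have h22 : Real.HolderConjugate 2 2 := Real.HolderConjugate.two_two
  have hHolder := ENNReal.lintegral_mul_le_Lp_mul_Lq volume h22 hFmeas.aemeasurable
    hGmeas.aemeasurable
  -- identify the G-term with D4n
  have hG2 : ∀ l, G l ^ (2:ℝ) =
      ENNReal.ofReal (Wf ν m ε c t l * (l ^ 2 * gradSq l (φ l) (dφ l))) := by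
    intro l
    rw [hG]
    simp only []
    rw [← ENNReal.rpow_mul]
    norm_num
  -- bound the F-term
  have hF2 : ∀ l, F l ^ (2:ℝ) =
      ENNReal.ofReal 2 * (ENNReal.ofReal (Wf ν m ε c t l))⁻¹ := by
    intro l
    rw [hF]
    simp only []
    rw [ENNReal.mul_rpow_of_nonneg _ _ (by norm_num : (0:ℝ) ≤ 2), ← ENNReal.rpow_mul,
      ENNReal.ofReal_rpow_of_nonneg (Real.sqrt_nonneg 2) (by norm_num : (0:ℝ) ≤ 2)]
    norm_num
  have hFint : ∫⁻ l, F l ^ (2:ℝ) ≤ ENNReal.ofReal (2 * Real.pi) := by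
    calc ∫⁻ l, F l ^ (2:ℝ)
        = ∫⁻ l, ENNReal.ofReal 2 * (ENNReal.ofReal (Wf ν m ε c t l))⁻¹ := by
          exact lintegral_congr hF2
      _ = ENNReal.ofReal 2 * ∫⁻ l, (ENNReal.ofReal (Wf ν m ε c t l))⁻¹ :=
          lintegral_const_mul' _ _ ENNReal.ofReal_ne_top
      _ ≤ ENNReal.ofReal 2 * ∫⁻ l, ENNReal.ofReal ((1 + l ^ 2)⁻¹) := by
          apply mul_le_mul_right (lintegral_mono fun l => ?_)
          rw [ENNReal.ofReal_inv_of_pos (by positivity : (0:ℝ) < 1 + l ^ 2)]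
          exact ENNReal.inv_le_inv.2 (ENNReal.ofReal_le_ofReal
            (Wf_ge hν.1 hm.le hε.1.le hc.le ht l))
      _ = ENNReal.ofReal 2 * ENNReal.ofReal Real.pi := by
          rw [← MeasureTheory.ofReal_integral_eq_lintegral_ofReal integrable_inv_one_add_sq
            (ae_of_all _ fun l => by positivity), integral_univ_inv_one_add_sq]
      _ = ENNReal.ofReal (2 * Real.pi) := (ENNReal.ofReal_mul (by norm_num)).symm
  calc ∫⁻ l : ℝ, ENNReal.ofReal (|l| * Linfy (φ l))
      ≤ ∫⁻ l, F l * G l := lintegral_mono_ae hae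
    _ ≤ (∫⁻ l, F l ^ (2:ℝ)) ^ ((1:ℝ)/2) * (∫⁻ l, G l ^ (2:ℝ)) ^ ((1:ℝ)/2) := by
        simpa using hHolder
    _ ≤ ENNReal.ofReal (Real.sqrt (2 * Real.pi)) *
        (D4n ν m ε c t φ dφ) ^ ((1:ℝ)/2) := by
        have hGeq : (∫⁻ l, G l ^ (2:ℝ)) = D4n ν m ε c t φ dφ := by
          rw [D4n]; exact lintegral_congr hG2
        rw [hGeq]
        apply mul_le_mul_left
        calc (∫⁻ l, F l ^ (2:ℝ)) ^ ((1:ℝ)/2)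
            ≤ (ENNReal.ofReal (2 * Real.pi)) ^ ((1:ℝ)/2) :=
              ENNReal.rpow_le_rpow hFint half_nonneg
          _ = ENNReal.ofReal (Real.sqrt (2 * Real.pi)) := by
              rw [ENNReal.ofReal_rpow_of_nonneg (by positivity) half_nonneg,
                ← Real.sqrt_eq_rpow]

end
end

section
/- Under the standing assumptions, ∫_ℝ ‖ω_k‖_{L^∞_y([-1,1])} dk ≲ ν^{-1/2}·𝓓₁^{1/2}. (Fifth estimate of Lemma 3.1.) -/
open MeasureTheory Set Filter Topology
open scoped ENNReal

noncomputable section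

-- AUX LEMMAS

lemma lamf_meas (ν : ℝ) : Measurable (lamf ν) := by
  unfold lamf
  exact Measurable.ite (measurableSet_le measurable_const measurable_abs)
    (measurable_const.mul (measurable_abs.pow measurable_const)) measurable_const

lemma Wf_meas (ν m ε c t : ℝ) : Measurable (Wf ν m ε c t) := by
  unfold Wf
  exact ((((measurable_const.mul (lamf_meas ν)).mul measurable_const).exp).mul
    ((measurable_const.add ((measurable_id.pow_const 2))).pow measurable_const)).mul
    ((measurable_const.add (measurable_inv.pow_const 2)).pow measurable_const)

lemma one_add_sq_le_Wf {ν m ε c t : ℝ} (hν : 0 ≤ ν) (hm : 1 ≤ m) (hε : 0 ≤ ε)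
    (hc : 0 ≤ c) (ht : 0 ≤ t) (k : ℝ) : 1 + k ^ 2 ≤ Wf ν m ε c t k := by
  unfold Wf
  have h1 : (1:ℝ) ≤ 1 + k ^ 2 := by nlinarith [sq_nonneg k]
  have h2 : (1:ℝ) ≤ 1 + k⁻¹ ^ 2 := by nlinarith [sq_nonneg k⁻¹]
  have he : (1:ℝ) ≤ Real.exp (2 * c * lamf ν k * t) := by
    apply Real.one_le_exp
    have := lamf_nonneg hν k
    positivity
  have hA : 1 + k ^ 2 ≤ (1 + k ^ 2) ^ m := by
    calc 1 + k ^ 2 = (1 + k ^ 2) ^ (1:ℝ) := (Real.rpow_one _).symm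
    _ ≤ (1 + k ^ 2) ^ m := Real.rpow_le_rpow_of_exponent_le h1 hm
  have hB : (1:ℝ) ≤ (1 + k⁻¹ ^ 2) ^ ε := by
    calc (1:ℝ) = (1 + k⁻¹ ^ 2) ^ (0:ℝ) := (Real.rpow_zero _).symm
    _ ≤ (1 + k⁻¹ ^ 2) ^ ε := Real.rpow_le_rpow_of_exponent_le h2 hε
  have hk0 : (0:ℝ) < 1 + k ^ 2 := by positivity
  calc 1 + k ^ 2 = 1 * (1 + k ^ 2) * 1 := by ring
  _ ≤ Real.exp (2 * c * lamf ν k * t) * ((1 + k ^ 2) ^ m) * ((1 + k⁻¹ ^ 2) ^ ε) := by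
      refine mul_le_mul (mul_le_mul he hA hk0.le (Real.exp_pos _).le) hB zero_le_one ?_
      have : (0:ℝ) < (1 + k ^ 2) ^ m := Real.rpow_pos_of_pos hk0 m
      positivity

/-- Sup bound: if `f(-1)=0` and `f` is the primitive of `g` on `[-1,1]` with `g ∈ L²`,
then `‖f‖_∞ ≤ √(2 ∫ ‖g‖²)`. -/
lemma key_sup (f g : ℝ → ℂ) (hf0 : f (-1) = 0)
    (hFTC : ∀ y ∈ Set.Icc (-1:ℝ) 1, f y = f (-1) + ∫ s in (-1:ℝ)..y, g s)
    (hg : IntegrableOn g (Set.Icc (-1:ℝ) 1))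
    (hg2 : IntegrableOn (fun y => ‖g y‖ ^ 2) (Set.Icc (-1:ℝ) 1))
    (hgm : AEStronglyMeasurable g (volume.restrict (Set.Icc (-1:ℝ) 1))) :
    Linfy f ≤ Real.sqrt (2 * ∫ y in Set.Icc (-1:ℝ) 1, ‖g y‖ ^ 2) := by
  haveI : Fact (volume (Set.Icc (-1:ℝ) 1) < ⊤) :=
    ⟨by rw [Real.volume_Icc]; exact ENNReal.ofReal_lt_top⟩
  set IK := ∫ y in Set.Icc (-1:ℝ) 1, ‖g y‖ ^ 2 with hIKdef
  have hIK0 : 0 ≤ IK := setIntegral_nonneg measurableSet_Icc (fun y _ => by positivity)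
  have hrpow2 : ∀ x : ℝ, 0 ≤ x → x ^ (2:ℝ) = x ^ (2:ℕ) := fun x hx => by
    rw [← Real.rpow_natCast x 2]; norm_num
  -- Cauchy–Schwarz
  have hCS : ∫ y in Set.Icc (-1:ℝ) 1, ‖g y‖ ≤ Real.sqrt (2 * IK) := by
    have hconj : Real.HolderConjugate 2 2 := Real.HolderConjugate.two_two
    have hmem1 : MemLp (fun y => ‖g y‖) (ENNReal.ofReal 2)
        (volume.restrict (Set.Icc (-1:ℝ) 1)) := by
      rw [show ENNReal.ofReal 2 = 2 by norm_num]
      rw [memLp_two_iff_integrable_sq hgm.norm]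
      exact hg2
    have hmem2 : MemLp (fun _ : ℝ => (1:ℝ)) (ENNReal.ofReal 2)
        (volume.restrict (Set.Icc (-1:ℝ) 1)) := memLp_const 1
    have := integral_mul_le_Lp_mul_Lq_of_nonneg hconj
      (Filter.Eventually.of_forall fun y => norm_nonneg (g y))
      (Filter.Eventually.of_forall fun _ => zero_le_one) hmem1 hmem2
    simp only [mul_one, Real.one_rpow] at this
    have hvol : ∫ _ in Set.Icc (-1:ℝ) 1, (1:ℝ) = 2 := by
      simp [Real.volume_Icc]
      norm_num
    rw [hvol] at this
    have hI2 : ∫ y in Set.Icc (-1:ℝ) 1, ‖g y‖ ^ (2:ℝ) = IK := by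
      apply setIntegral_congr_fun measurableSet_Icc
      intro y _
      exact hrpow2 _ (norm_nonneg _)
    rw [hI2] at this
    calc ∫ y in Set.Icc (-1:ℝ) 1, ‖g y‖ ≤ IK ^ ((1:ℝ)/2) * (2:ℝ) ^ ((1:ℝ)/2) := by
          simpa [one_div] using this
    _ = Real.sqrt (2 * IK) := by
        rw [Real.sqrt_eq_rpow, Real.mul_rpow (by norm_num) hIK0, mul_comm]
  -- pointwise bound
  haveI : Nonempty (Set.Icc (-1:ℝ) 1) := ⟨⟨0, by norm_num⟩⟩
  apply ciSup_le
  rintro ⟨y, hy⟩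
  simp only
  rw [hFTC y hy, hf0, zero_add]
  calc ‖∫ s in (-1:ℝ)..y, g s‖ ≤ ∫ s in (-1:ℝ)..y, ‖g s‖ :=
        intervalIntegral.norm_integral_le_integral_norm hy.1
  _ = ∫ s in Set.Ioc (-1:ℝ) y, ‖g s‖ := intervalIntegral.integral_of_le hy.1
  _ ≤ ∫ s in Set.Icc (-1:ℝ) 1, ‖g s‖ := by
      apply setIntegral_mono_set hg.norm
        (Filter.Eventually.of_forall fun s => norm_nonneg _)
      exact ((Set.Ioc_subset_Icc_self.trans
        (Set.Icc_subset_Icc le_rfl hy.2)).eventuallyLE)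
  _ ≤ Real.sqrt (2 * IK) := hCS


theorem lemma31_fifth (m ε : ℝ) (hm : 1 < m) (hε : ε ∈ Set.Ioo (0 : ℝ) (1 / 12)) :
    ∃ C : ℝ, 0 < C ∧
      ∀ (ν c t : ℝ), ν ∈ Set.Ioo (0 : ℝ) 1 → 0 < c → 0 ≤ t →
      ∀ (ω dω d2ω φ dφ d2φ : ℝ → ℝ → ℂ),
      Measurable (Function.uncurry ω) → Measurable (Function.uncurry dω) →
      Measurable (Function.uncurry d2ω) → Measurable (Function.uncurry φ) →
      Measurable (Function.uncurry dφ) → Measurable (Function.uncurry d2φ) →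
      (∀ k : ℝ, ω k (-1) = 0 ∧ ω k 1 = 0) →
      (∀ k : ℝ, ∀ y ∈ Set.Icc (-1 : ℝ) 1,
        ω k y = ω k (-1) + ∫ s in (-1 : ℝ)..y, dω k s) →
      (∀ k : ℝ, ∀ y ∈ Set.Icc (-1 : ℝ) 1,
        dω k y = dω k (-1) + ∫ s in (-1 : ℝ)..y, d2ω k s) →
      (∀ k : ℝ, MemLp (d2ω k) 2 (volume.restrict (Set.Icc (-1 : ℝ) 1))) →
      (∀ k : ℝ, k ≠ 0 → φ k (-1) = 0 ∧ φ k 1 = 0) →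
      (∀ k : ℝ, k ≠ 0 → ∀ y ∈ Set.Icc (-1 : ℝ) 1,
        φ k y = φ k (-1) + ∫ s in (-1 : ℝ)..y, dφ k s) →
      (∀ k : ℝ, k ≠ 0 → ∀ y ∈ Set.Icc (-1 : ℝ) 1,
        dφ k y = dφ k (-1) + ∫ s in (-1 : ℝ)..y, d2φ k s) →
      (∀ k : ℝ, k ≠ 0 → ∀ y ∈ Set.Icc (-1 : ℝ) 1,
        d2φ k y - (k : ℂ) ^ 2 * φ k y = ω k y) →
      EEn ν m ε c t ω dω ≠ ⊤ → D1n ν m ε c t ω dω ≠ ⊤ → D2n ν m ε c t dω d2ω ≠ ⊤ →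
      D3n ν m ε c t ω ≠ ⊤ → D4n ν m ε c t φ dφ ≠ ⊤ → D5n ν m ε c t dφ d2φ ≠ ⊤ →
      ∫⁻ k : ℝ, ENNReal.ofReal (Linfy (ω k)) ≤
        ENNReal.ofReal (C * ν ^ (-(1 : ℝ) / 2)) * (D1n ν m ε c t ω dω) ^ ((1 : ℝ) / 2) := by
  refine ⟨(2 * Real.pi) ^ ((1:ℝ)/2), by positivity, ?_⟩
  intro ν c t hν hc ht ω dω d2ω φ dφ d2φ hmω hmdω hmd2ω _ _ _ hbc hFTCω hFTCdω hL2d2ω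
    _ _ _ _ hE hD1 hD2 hD3 hD4 hD5
  obtain ⟨hν0, hν1⟩ := hν
  haveI : Fact (volume (Set.Icc (-1:ℝ) 1) < ⊤) :=
    ⟨by rw [Real.volume_Icc]; exact ENNReal.ofReal_lt_top⟩
  have hν' : ν ≠ 0 := ne_of_gt hν0
  set IK : ℝ → ℝ := fun k => ∫ y in Set.Icc (-1:ℝ) 1, ‖dω k y‖ ^ 2 with hIKdef
  have hIK0 : ∀ k, 0 ≤ IK k := fun k =>
    setIntegral_nonneg measurableSet_Icc fun y _ => by positivity
  -- step 1 : per-k sup bound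
  have hsup : ∀ k, Linfy (ω k) ≤ Real.sqrt (2 * IK k) := by
    intro k
    have hmdk : Measurable (dω k) := hmdω.of_uncurry_left
    have hd2i : Integrable (d2ω k) (volume.restrict (Set.Icc (-1:ℝ) 1)) :=
      (hL2d2ω k).integrable (by norm_num)
    set B := ‖dω k (-1)‖ + ∫ y in Set.Icc (-1:ℝ) 1, ‖d2ω k y‖ with hBdef
    have hB : ∀ y ∈ Set.Icc (-1:ℝ) 1, ‖dω k y‖ ≤ B := by
      intro y hy
      rw [hFTCdω k y hy]
      refine (norm_add_le _ _).trans (add_le_add le_rfl ?_)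
      calc ‖∫ s in (-1:ℝ)..y, d2ω k s‖ ≤ ∫ s in (-1:ℝ)..y, ‖d2ω k s‖ :=
            intervalIntegral.norm_integral_le_integral_norm hy.1
      _ = ∫ s in Set.Ioc (-1:ℝ) y, ‖d2ω k s‖ := intervalIntegral.integral_of_le hy.1
      _ ≤ ∫ s in Set.Icc (-1:ℝ) 1, ‖d2ω k s‖ := by
          apply setIntegral_mono_set hd2i.norm
            (Filter.Eventually.of_forall fun s => norm_nonneg _)
          exact ((Set.Ioc_subset_Icc_self.trans
            (Set.Icc_subset_Icc le_rfl hy.2)).eventuallyLE)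
    have hdi : IntegrableOn (dω k) (Set.Icc (-1:ℝ) 1) := by
      refine Integrable.mono' (integrable_const B) hmdk.aestronglyMeasurable ?_
      exact (ae_restrict_iff' measurableSet_Icc).2 (Filter.Eventually.of_forall hB)
    have hdi2 : IntegrableOn (fun y => ‖dω k y‖ ^ 2) (Set.Icc (-1:ℝ) 1) := by
      refine Integrable.mono' (integrable_const (B ^ 2))
        ((hmdk.norm.pow_const 2).aestronglyMeasurable) ?_
      refine (ae_restrict_iff' measurableSet_Icc).2
        (Filter.Eventually.of_forall fun y hy => ?_)
      rw [Real.norm_of_nonneg (by positivity)]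
      exact pow_le_pow_left₀ (norm_nonneg _) (hB y hy) 2
    exact key_sup (ω k) (dω k) (hbc k).1 (hFTCω k) hdi hdi2 hmdk.aestronglyMeasurable
  -- step 2 : pointwise ENNReal bound
  have hsq : ∀ x : ℝ≥0∞, (x ^ ((1:ℝ)/2)) ^ (2:ℝ) = x := fun x => by
    rw [← ENNReal.rpow_mul]; norm_num
  have hpt : ∀ k, ENNReal.ofReal (Linfy (ω k)) ≤
      (ENNReal.ofReal (2/ν * (Wf ν m ε c t k)⁻¹)) ^ ((1:ℝ)/2) *
      (ENNReal.ofReal (Wf ν m ε c t k * (ν * gradSq k (ω k) (dω k)))) ^ ((1:ℝ)/2) := by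
    intro k
    have hWk : 0 < Wf ν m ε c t k := Wf_pos ν m ε c t k
    have hW' : Wf ν m ε c t k ≠ 0 := ne_of_gt hWk
    have hL2 : (L2y (dω k)) ^ 2 = IK k := by
      show ((IK k) ^ ((1:ℝ)/2)) ^ 2 = IK k
      rw [← Real.rpow_natCast ((IK k) ^ ((1:ℝ)/2)) 2, ← Real.rpow_mul (hIK0 k)]
      norm_num
    have hIKle : IK k ≤ gradSq k (ω k) (dω k) := by
      have h0 : 0 ≤ k ^ 2 * (L2y (ω k)) ^ 2 := by positivity
      unfold gradSq
      rw [hL2]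
      linarith
    calc ENNReal.ofReal (Linfy (ω k)) ≤ ENNReal.ofReal (Real.sqrt (2 * IK k)) :=
          ENNReal.ofReal_le_ofReal (hsup k)
    _ = (ENNReal.ofReal (2 * IK k)) ^ ((1:ℝ)/2) := by
        rw [Real.sqrt_eq_rpow, ENNReal.ofReal_rpow_of_nonneg (by positivity) (by norm_num)]
    _ ≤ (ENNReal.ofReal ((2/ν * (Wf ν m ε c t k)⁻¹) *
          (Wf ν m ε c t k * (ν * gradSq k (ω k) (dω k))))) ^ ((1:ℝ)/2) := by
        apply ENNReal.rpow_le_rpow _ (by norm_num)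
        apply ENNReal.ofReal_le_ofReal
        have heq : (2/ν * (Wf ν m ε c t k)⁻¹) *
            (Wf ν m ε c t k * (ν * gradSq k (ω k) (dω k))) =
            2 * gradSq k (ω k) (dω k) := by
          field_simp
        rw [heq]
        exact mul_le_mul_of_nonneg_left hIKle (by norm_num)
    _ = _ := by
        rw [ENNReal.ofReal_mul (by positivity),
          ENNReal.mul_rpow_of_nonneg _ _ (by norm_num)]
  -- measurability
  have hWmeas : Measurable (Wf ν m ε c t) := Wf_meas ν m ε c t
  have hhm : Measurable fun k => (ENNReal.ofReal (2/ν * (Wf ν m ε c t k)⁻¹)) ^ ((1:ℝ)/2) :=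
    ((hWmeas.inv.const_mul (2/ν)).ennreal_ofReal).pow measurable_const
  have hIωmeas : Measurable fun k => ∫ y in Set.Icc (-1:ℝ) 1, ‖ω k y‖ ^ 2 :=
    (StronglyMeasurable.integral_prod_right'
      (f := fun p : ℝ × ℝ => ‖Function.uncurry ω p‖ ^ 2)
      ((hmω.norm.pow_const 2).stronglyMeasurable)).measurable
  have hIdωmeas : Measurable fun k => ∫ y in Set.Icc (-1:ℝ) 1, ‖dω k y‖ ^ 2 :=
    (StronglyMeasurable.integral_prod_right'
      (f := fun p : ℝ × ℝ => ‖Function.uncurry dω p‖ ^ 2)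
      ((hmdω.norm.pow_const 2).stronglyMeasurable)).measurable
  have hgradm : Measurable fun k => gradSq k (ω k) (dω k) := by
    unfold gradSq L2y
    exact ((measurable_id.pow_const 2).mul ((hIωmeas.pow measurable_const).pow_const 2)).add
      ((hIdωmeas.pow measurable_const).pow_const 2)
  have hGm : Measurable fun k =>
      (ENNReal.ofReal (Wf ν m ε c t k * (ν * gradSq k (ω k) (dω k)))) ^ ((1:ℝ)/2) :=
    ((hWmeas.mul (hgradm.const_mul ν)).ennreal_ofReal).pow measurable_const
  -- Cauchy-Schwarz in k
  have hconj : Real.HolderConjugate 2 2 := Real.HolderConjugate.two_two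
  have hCS := ENNReal.lintegral_mul_le_Lp_mul_Lq volume hconj hhm.aemeasurable hGm.aemeasurable
  simp only [Pi.mul_apply, hsq] at hCS
  -- bound the first factor
  have hfirst : (∫⁻ k : ℝ, ENNReal.ofReal (2/ν * (Wf ν m ε c t k)⁻¹)) ≤
      ENNReal.ofReal (2/ν * Real.pi) := by
    calc ∫⁻ k : ℝ, ENNReal.ofReal (2/ν * (Wf ν m ε c t k)⁻¹)
        ≤ ∫⁻ k : ℝ, ENNReal.ofReal (2/ν * (1 + k ^ 2)⁻¹) := by
          apply lintegral_mono
          intro k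
          apply ENNReal.ofReal_le_ofReal
          have h1 : (0:ℝ) < 1 + k ^ 2 := by positivity
          refine mul_le_mul_of_nonneg_left ?_ (by positivity)
          exact inv_anti₀ h1
            (one_add_sq_le_Wf hν0.le hm.le hε.1.le hc.le ht k)
    _ = ENNReal.ofReal (∫ k : ℝ, 2/ν * (1 + k ^ 2)⁻¹) :=
        (ofReal_integral_eq_lintegral_ofReal
          ((integrable_inv_one_add_sq).const_mul (2/ν))
          (Filter.Eventually.of_forall fun k => by positivity)).symm
    _ = ENNReal.ofReal (2/ν * Real.pi) := by
        rw [integral_const_mul, integral_univ_inv_one_add_sq]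
  -- conclude
  have hC : (ENNReal.ofReal (2/ν * Real.pi)) ^ ((1:ℝ)/2) =
      ENNReal.ofReal ((2 * Real.pi) ^ ((1:ℝ)/2) * ν ^ (-(1:ℝ)/2)) := by
    rw [ENNReal.ofReal_rpow_of_pos (by positivity)]
    congr 1
    rw [show (2/ν * Real.pi) = (2 * Real.pi) * ν⁻¹ by ring,
      Real.mul_rpow (by positivity) (by positivity),
      Real.inv_rpow hν0.le, neg_div, Real.rpow_neg hν0.le]
  calc ∫⁻ k : ℝ, ENNReal.ofReal (Linfy (ω k))
      ≤ ∫⁻ k : ℝ, (ENNReal.ofReal (2/ν * (Wf ν m ε c t k)⁻¹)) ^ ((1:ℝ)/2) *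
        (ENNReal.ofReal (Wf ν m ε c t k * (ν * gradSq k (ω k) (dω k)))) ^ ((1:ℝ)/2) :=
        lintegral_mono hpt
  _ ≤ (∫⁻ k : ℝ, ENNReal.ofReal (2/ν * (Wf ν m ε c t k)⁻¹)) ^ ((1:ℝ)/2) *
      (∫⁻ k : ℝ, ENNReal.ofReal (Wf ν m ε c t k * (ν * gradSq k (ω k) (dω k)))) ^ ((1:ℝ)/2) := by
      simpa [one_div] using hCS
  _ ≤ (ENNReal.ofReal (2/ν * Real.pi)) ^ ((1:ℝ)/2) *
      (D1n ν m ε c t ω dω) ^ ((1:ℝ)/2) := by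
      gcongr <;> first
        | exact hfirst
        | exact le_of_eq rfl
  _ = ENNReal.ofReal ((2 * Real.pi) ^ ((1:ℝ)/2) * ν ^ (-(1:ℝ)/2)) *
      (D1n ν m ε c t ω dω) ^ ((1:ℝ)/2) := by rw [hC]

end
end

section
/- Under the standing assumptions, ∫_{{|ℓ| ≥ ν}} W(ℓ) |ℓ|^{7/3} ‖∂_y φ_ℓ‖²_{L^∞_y([-1,1])} dℓ ≲ ν^{-2/3}·𝓓₅. (First estimate of Lemma 3.3.) -/
open MeasureTheory Set Filter Topology
open scoped ENNReal

noncomputable section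

lemma key_sq {h : ℝ → ℝ} {a b : ℝ} (hab : a ≤ b) (hm : Measurable h)
    (hi : IntegrableOn h (Icc a b)) :
    ∫ s in a..b, (∫ u in a..s, h u) * h s = (∫ u in a..b, h u) ^ 2 / 2 := by
  have hiu : IntegrableOn h (uIcc a b) := by rwa [uIcc_of_le hab]
  have hiI : IntegrableOn h (Ioc a b) := hi.mono_set Ioc_subset_Icc_self
  have hII : IntervalIntegrable h volume a b := hiu.intervalIntegrable
  have hHc : ContinuousOn (fun s => ∫ u in a..s, h u) (uIcc a b) :=
    intervalIntegral.continuousOn_primitive_interval hiu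
  have hKc : ContinuousOn (fun s => ∫ u in s..b, h u) (uIcc a b) :=
    intervalIntegral.continuousOn_primitive_interval_left hiu
  have hHh : IntervalIntegrable (fun s => (∫ u in a..s, h u) * h s) volume a b :=
    hII.continuousOn_mul hHc
  have hKh : IntervalIntegrable (fun s => (∫ u in s..b, h u) * h s) volume a b :=
    hII.continuousOn_mul hKc
  rw [intervalIntegral.integral_of_le hab]
  set T : ℝ := ∫ u in Ioc a b, h u with hT
  have hsplit : ∀ s ∈ Ioc a b, T = (∫ u in a..s, h u) + ∫ u in s..b, h u := by
    intro s hs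
    rw [intervalIntegral.integral_of_le hs.1.le, intervalIntegral.integral_of_le hs.2, hT,
      (Ioc_union_Ioc_eq_Ioc hs.1.le hs.2).symm,
      setIntegral_union (Ioc_disjoint_Ioc_of_le le_rfl) measurableSet_Ioc
        (hiI.mono_set (Ioc_subset_Ioc_right hs.2)) (hiI.mono_set (Ioc_subset_Ioc_left hs.1.le))]
  have hfub : ∫ s in Ioc a b, (∫ u in s..b, h u) * h s
      = ∫ s in Ioc a b, (∫ u in a..s, h u) * h s := by
    have m1 : Measurable fun p : ℝ × ℝ => if p.1 < p.2 then h p.2 * h p.1 else 0 :=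
      Measurable.ite (measurableSet_lt measurable_fst measurable_snd)
        ((hm.comp measurable_snd).mul (hm.comp measurable_fst)) measurable_const
    have hprod : Integrable (Function.uncurry fun s u : ℝ => if s < u then h u * h s else 0)
        ((volume.restrict (Ioc a b)).prod (volume.restrict (Ioc a b))) := by
      have hb : Integrable (fun p : ℝ × ℝ => |h p.1| * |h p.2|)
          ((volume.restrict (Ioc a b)).prod (volume.restrict (Ioc a b))) :=
        (hiI.abs).mul_prod (hiI.abs)
      refine hb.mono' m1.aestronglyMeasurable (Filter.Eventually.of_forall fun p => ?_)
      by_cases hc : p.1 < p.2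
      · simp only [Function.uncurry, hc, if_pos, Real.norm_eq_abs, abs_mul]
        rw [mul_comm]
      · simp only [Function.uncurry, hc, if_neg, not_false_iff, norm_zero]
        positivity
    have lhs_eq : EqOn (fun s => (∫ u in s..b, h u) * h s)
        (fun s => ∫ u in Ioc a b, (if s < u then h u * h s else 0)) (Ioc a b) := by
      intro s hs
      have hind : (fun u => if s < u then h u * h s else 0)
          = (Ioi s).indicator (fun u => h u * h s) := by
        funext u; by_cases hc : s < u <;> simp [indicator, hc]
      have hset : Ioc a b ∩ Ioi s = Ioc s b := by
        ext x
        simp only [mem_inter_iff, mem_Ioc, mem_Ioi]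
        exact ⟨fun ⟨⟨_, h2⟩, h3⟩ => ⟨h3, h2⟩, fun ⟨h3, h2⟩ => ⟨⟨hs.1.trans h3, h2⟩, h3⟩⟩
      simp only
      rw [hind, setIntegral_indicator measurableSet_Ioi, hset,
        intervalIntegral.integral_of_le hs.2, integral_mul_const]
    have rhs_eq : EqOn (fun u => ∫ s in Ioc a b, (if s < u then h u * h s else 0))
        (fun u => (∫ s in a..u, h s) * h u) (Ioc a b) := by
      intro u hu
      have hind : (fun s => if s < u then h u * h s else 0)
          = (Iio u).indicator (fun s => h u * h s) := by
        funext s; by_cases hc : s < u <;> simp [indicator, hc]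
      have hset : Ioc a b ∩ Iio u = Ioo a u := by
        ext x
        simp only [mem_inter_iff, mem_Ioc, mem_Iio, mem_Ioo]
        exact ⟨fun ⟨⟨h1, _⟩, h3⟩ => ⟨h1, h3⟩, fun ⟨h1, h3⟩ => ⟨⟨h1, h3.le.trans hu.2⟩, h3⟩⟩
      simp only
      rw [hind, setIntegral_indicator measurableSet_Iio, hset, integral_const_mul,
        ← integral_Ioc_eq_integral_Ioo, ← intervalIntegral.integral_of_le hu.1.le, mul_comm]
    calc ∫ s in Ioc a b, (∫ u in s..b, h u) * h s
        = ∫ s in Ioc a b, ∫ u in Ioc a b, (if s < u then h u * h s else 0) :=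
          setIntegral_congr_fun measurableSet_Ioc lhs_eq
      _ = ∫ u in Ioc a b, ∫ s in Ioc a b, (if s < u then h u * h s else 0) :=
          integral_integral_swap hprod
      _ = ∫ u in Ioc a b, (∫ s in a..u, h s) * h u :=
          setIntegral_congr_fun measurableSet_Ioc rhs_eq
  have hTsq : (∫ s in Ioc a b, (∫ u in a..s, h u) * h s)
      + (∫ s in Ioc a b, (∫ u in s..b, h u) * h s) = T ^ 2 := by
    rw [← integral_add hHh.1 hKh.1]
    calc ∫ s in Ioc a b, ((∫ u in a..s, h u) * h s + (∫ u in s..b, h u) * h s)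
        = ∫ s in Ioc a b, T * h s :=
          setIntegral_congr_fun measurableSet_Ioc fun s hs => by
            rw [← add_mul, ← hsplit s hs]
      _ = T * ∫ s in Ioc a b, h s := integral_const_mul T h
      _ = T ^ 2 := by rw [← hT]; ring
  rw [hfub] at hTsq
  rw [intervalIntegral.integral_of_le hab, ← hT]
  linarith

lemma L2y_nonneg (f : ℝ → ℂ) : 0 ≤ L2y f :=
  Real.rpow_nonneg (integral_nonneg fun y => sq_nonneg _) _

lemma cs_bound {g h : ℝ → ℝ} (hgm : Measurable g) (hhm : Measurable h) {Mg Mh : ℝ}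
    (hgb : ∀ y ∈ Icc (-1:ℝ) 1, |g y| ≤ Mg) (hhb : ∀ y ∈ Icc (-1:ℝ) 1, |h y| ≤ Mh) :
    ∫ y in Icc (-1:ℝ) 1, |g y| * |h y| ≤
      (∫ y in Icc (-1:ℝ) 1, g y ^ 2) ^ ((1:ℝ)/2) * (∫ y in Icc (-1:ℝ) 1, h y ^ 2) ^ ((1:ℝ)/2) := by
  have hpq : (2:ℝ).HolderConjugate 2 := Real.HolderConjugate.two_two
  have hmg : MemLp (fun y => |g y|) (ENNReal.ofReal 2) (volume.restrict (Icc (-1:ℝ) 1)) := by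
    refine MemLp.of_bound (hgm.abs.aestronglyMeasurable) Mg ?_
    exact (ae_restrict_iff' measurableSet_Icc).2 (Filter.Eventually.of_forall fun y hy => by
      simpa [Real.norm_eq_abs, abs_abs] using hgb y hy)
  have hmh : MemLp (fun y => |h y|) (ENNReal.ofReal 2) (volume.restrict (Icc (-1:ℝ) 1)) := by
    refine MemLp.of_bound (hhm.abs.aestronglyMeasurable) Mh ?_
    exact (ae_restrict_iff' measurableSet_Icc).2 (Filter.Eventually.of_forall fun y hy => by
      simpa [Real.norm_eq_abs, abs_abs] using hhb y hy)
  have := integral_mul_le_Lp_mul_Lq_of_nonneg hpq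
    (Filter.Eventually.of_forall fun y => abs_nonneg (g y))
    (Filter.Eventually.of_forall fun y => abs_nonneg (h y)) hmg hmh
  calc ∫ y in Icc (-1:ℝ) 1, |g y| * |h y|
      ≤ (∫ y in Icc (-1:ℝ) 1, |g y| ^ (2:ℝ)) ^ (1/(2:ℝ))
        * (∫ y in Icc (-1:ℝ) 1, |h y| ^ (2:ℝ)) ^ (1/(2:ℝ)) := this
    _ = (∫ y in Icc (-1:ℝ) 1, g y ^ 2) ^ ((1:ℝ)/2) * (∫ y in Icc (-1:ℝ) 1, h y ^ 2) ^ ((1:ℝ)/2) := by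
        congr 2
        · apply integral_congr_ae (Filter.Eventually.of_forall fun y => ?_)
          rw [show ((2:ℝ)) = ((2:ℕ):ℝ) by norm_num, Real.rpow_natCast, sq_abs]
        · apply integral_congr_ae (Filter.Eventually.of_forall fun y => ?_)
          rw [show ((2:ℝ)) = ((2:ℕ):ℝ) by norm_num, Real.rpow_natCast, sq_abs]

lemma sq_eq {g h : ℝ → ℝ} {a b : ℝ} (hab : a ≤ b) (hm : Measurable h)
    (hi : IntegrableOn h (Icc a b))
    (hg : ∀ s ∈ Icc a b, g s = g a + ∫ u in a..s, h u) :
    g b ^ 2 = g a ^ 2 + 2 * ∫ s in a..b, g s * h s := by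
  have hiu : IntegrableOn h (uIcc a b) := by rwa [uIcc_of_le hab]
  have hII : IntervalIntegrable h volume a b := hiu.intervalIntegrable
  have hHc : ContinuousOn (fun s => ∫ u in a..s, h u) (uIcc a b) :=
    intervalIntegral.continuousOn_primitive_interval hiu
  have hgb' : g b = g a + ∫ u in a..b, h u := hg b (right_mem_Icc.2 hab)
  have h1 : ∫ s in a..b, g s * h s
      = ∫ s in a..b, (g a + ∫ u in a..s, h u) * h s := by
    apply intervalIntegral.integral_congr
    intro s hs
    rw [uIcc_of_le hab] at hs
    show g s * h s = _
    rw [hg s hs]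
  have h2 : ∫ s in a..b, (g a + ∫ u in a..s, h u) * h s
      = g a * (∫ u in a..b, h u) + (∫ u in a..b, h u) ^ 2 / 2 := by
    have e : (fun s => (g a + ∫ u in a..s, h u) * h s)
        = fun s => g a * h s + (∫ u in a..s, h u) * h s := by funext s; ring
    rw [e, intervalIntegral.integral_add (hII.const_mul (g a)) (hII.continuousOn_mul hHc),
      intervalIntegral.integral_const_mul, key_sq hab hm hi]
  rw [h1, h2, hgb']; ring

lemma real_bound {g h : ℝ → ℝ} (hgm : Measurable g) (hhm : Measurable h) {Mg Mh : ℝ}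
    (hgb : ∀ y ∈ Icc (-1:ℝ) 1, |g y| ≤ Mg) (hhb : ∀ y ∈ Icc (-1:ℝ) 1, |h y| ≤ Mh)
    (hFTC : ∀ y ∈ Icc (-1:ℝ) 1, g y = g (-1) + ∫ s in (-1:ℝ)..y, h s)
    {y₁ y : ℝ} (hy₁ : y₁ ∈ Icc (-1:ℝ) 1) (hy : y ∈ Icc (-1:ℝ) 1) (hz : g y₁ = 0) :
    g y ^ 2 ≤ 2 * ((∫ t in Icc (-1:ℝ) 1, g t ^ 2) ^ ((1:ℝ)/2)
      * (∫ t in Icc (-1:ℝ) 1, h t ^ 2) ^ ((1:ℝ)/2)) := by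
  have hm1 : (-1:ℝ) ∈ Icc (-1:ℝ) 1 := by norm_num
  have hMg0 : 0 ≤ Mg := le_trans (abs_nonneg _) (hgb (-1) hm1)
  have hMh0 : 0 ≤ Mh := le_trans (abs_nonneg _) (hhb (-1) hm1)
  have hIh : IntegrableOn h (Icc (-1:ℝ) 1) := by
    refine memLp_one_iff_integrable.1 (MemLp.of_bound hhm.aestronglyMeasurable Mh ?_)
    exact (ae_restrict_iff' measurableSet_Icc).2 (Filter.Eventually.of_forall fun t ht => by
      simpa [Real.norm_eq_abs] using hhb t ht)
  have hIIuv : ∀ u ∈ Icc (-1:ℝ) 1, ∀ v ∈ Icc (-1:ℝ) 1, IntervalIntegrable h volume u v := by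
    intro u hu v hv
    exact (hIh.mono_set (ordConnected_Icc.uIcc_subset hu hv)).intervalIntegrable
  have hsub : ∀ c ∈ Icc (-1:ℝ) 1, ∀ s ∈ Icc (-1:ℝ) 1, g s = g c + ∫ u in c..s, h u := by
    intro c hc s hs
    have hadj : (∫ u in (-1:ℝ)..c, h u) + ∫ u in c..s, h u = ∫ u in (-1:ℝ)..s, h u :=
      intervalIntegral.integral_add_adjacent_intervals (hIIuv _ hm1 _ hc) (hIIuv _ hc _ hs)
    have h1 := hFTC c hc
    have h2 := hFTC s hs
    rw [h2, h1]
    linarith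
  have habs : ∀ c ∈ Icc (-1:ℝ) 1, ∀ d ∈ Icc (-1:ℝ) 1, c ≤ d →
      |∫ s in c..d, g s * h s| ≤ (∫ t in Icc (-1:ℝ) 1, g t ^ 2) ^ ((1:ℝ)/2)
        * (∫ t in Icc (-1:ℝ) 1, h t ^ 2) ^ ((1:ℝ)/2) := by
    intro c hc d hd hcd
    have hIgh : IntegrableOn (fun s => |g s| * |h s|) (Icc (-1:ℝ) 1) := by
      refine memLp_one_iff_integrable.1 (MemLp.of_bound
        (hgm.abs.mul hhm.abs).aestronglyMeasurable (Mg * Mh) ?_)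
      refine (ae_restrict_iff' measurableSet_Icc).2 (Filter.Eventually.of_forall fun t ht => ?_)
      have := mul_le_mul (hgb t ht) (hhb t ht) (abs_nonneg _) hMg0
      simpa [Real.norm_eq_abs, abs_mul, abs_abs] using this
    calc |∫ s in c..d, g s * h s| ≤ ∫ s in c..d, |g s * h s| :=
          intervalIntegral.abs_integral_le_integral_abs hcd
      _ = ∫ s in Ioc c d, |g s| * |h s| := by
          rw [intervalIntegral.integral_of_le hcd]
          exact setIntegral_congr_fun measurableSet_Ioc fun s _ => abs_mul _ _
      _ ≤ ∫ s in Icc (-1:ℝ) 1, |g s| * |h s| := by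
          refine setIntegral_mono_set hIgh
            (Filter.Eventually.of_forall fun s => mul_nonneg (abs_nonneg _) (abs_nonneg _))
            (HasSubset.Subset.eventuallyLE fun x hx => ⟨hc.1.trans hx.1.le, hx.2.trans hd.2⟩)
      _ ≤ _ := cs_bound hgm hhm hgb hhb
  rcases le_or_gt y₁ y with hcd | hcd
  · have hic : IntegrableOn h (Icc y₁ y) :=
      hIh.mono_set fun x hx => ⟨hy₁.1.trans hx.1, hx.2.trans hy.2⟩
    have heq := sq_eq hcd hhm hic fun s hs =>
      hsub y₁ hy₁ s ⟨hy₁.1.trans hs.1, hs.2.trans hy.2⟩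
    rw [hz] at heq
    have h3 := habs y₁ hy₁ y hy hcd
    have h4 := le_abs_self (∫ s in y₁..y, g s * h s)
    rw [heq]
    linarith
  · have hic : IntegrableOn h (Icc y y₁) :=
      hIh.mono_set fun x hx => ⟨hy.1.trans hx.1, hx.2.trans hy₁.2⟩
    have heq := sq_eq hcd.le hhm hic fun s hs =>
      hsub y hy s ⟨hy.1.trans hs.1, hs.2.trans hy₁.2⟩
    rw [hz] at heq
    have h3 := habs y hy y₁ hy₁ hcd.le
    have h4 := neg_abs_le (∫ s in y..y₁, g s * h s)
    linarith

lemma exists_zero {g : ℝ → ℝ} (hc : ContinuousOn g (Icc (-1:ℝ) 1))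
    (hint : (∫ y in (-1:ℝ)..1, g y) = 0) : ∃ z ∈ Icc (-1:ℝ) 1, g z = 0 := by
  have hu : uIcc (-1:ℝ) 1 = Icc (-1:ℝ) 1 := uIcc_of_le (by norm_num)
  have hII : IntervalIntegrable g volume (-1) 1 := by
    apply ContinuousOn.intervalIntegrable
    rwa [hu]
  by_contra hno
  push_neg at hno
  by_cases hpos : ∀ z ∈ Icc (-1:ℝ) 1, 0 < g z
  · have := intervalIntegral.intervalIntegral_pos_of_pos_on hII
      (fun x hx => hpos x ⟨hx.1.le, hx.2.le⟩) (by norm_num)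
    linarith
  · push_neg at hpos
    obtain ⟨y₀, hy₀, hy₀le⟩ := hpos
    by_cases hneg : ∀ z ∈ Icc (-1:ℝ) 1, g z < 0
    · have hIIn : IntervalIntegrable (fun x => -g x) volume (-1) 1 := hII.neg
      have := intervalIntegral.intervalIntegral_pos_of_pos_on hIIn
        (fun x hx => neg_pos.2 (hneg x ⟨hx.1.le, hx.2.le⟩)) (by norm_num)
      rw [intervalIntegral.integral_neg, hint] at this
      norm_num at this
    · push_neg at hneg
      obtain ⟨y₂, hy₂, hy₂ge⟩ := hneg
      have hsub : uIcc y₀ y₂ ⊆ Icc (-1:ℝ) 1 := ordConnected_Icc.uIcc_subset hy₀ hy₂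
      have h0 : (0:ℝ) ∈ uIcc (g y₀) (g y₂) := mem_uIcc.2 (Or.inl ⟨hy₀le, hy₂ge⟩)
      obtain ⟨z, hz, hgz⟩ := intermediate_value_uIcc (hc.mono hsub) h0
      exact hno z (hsub hz) hgz

lemma sqrt_ineq {p q r s : ℝ} (hp : 0 ≤ p) (hq : 0 ≤ q) (hr : 0 ≤ r) (hs : 0 ≤ s) :
    Real.sqrt p * Real.sqrt r + Real.sqrt q * Real.sqrt s
      ≤ Real.sqrt (p + q) * Real.sqrt (r + s) := by
  rw [← Real.sqrt_mul hp r, ← Real.sqrt_mul hq s, ← Real.sqrt_mul (by positivity) (r + s)]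
  have e4 : Real.sqrt (p * r) * Real.sqrt (q * s)
      = Real.sqrt (p * s) * Real.sqrt (q * r) := by
    rw [← Real.sqrt_mul (by positivity), ← Real.sqrt_mul (by positivity)]
    ring_nf
  have h2 : (Real.sqrt (p * r) + Real.sqrt (q * s)) ^ 2 ≤ (p + q) * (r + s) := by
    have e1 : Real.sqrt (p * r) ^ 2 = p * r := Real.sq_sqrt (by positivity)
    have e2 : Real.sqrt (q * s) ^ 2 = q * s := Real.sq_sqrt (by positivity)
    have e5 : Real.sqrt (p * s) ^ 2 = p * s := Real.sq_sqrt (by positivity)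
    have e6 : Real.sqrt (q * r) ^ 2 = q * r := Real.sq_sqrt (by positivity)
    nlinarith [sq_nonneg (Real.sqrt (p * s) - Real.sqrt (q * r))]
  calc Real.sqrt (p * r) + Real.sqrt (q * s)
      ≤ Real.sqrt ((p + q) * (r + s)) := by
        rw [show (p + q) * (r + s) = ((p+q)*(r+s)) from rfl]
        exact Real.le_sqrt_of_sq_le h2
    _ = Real.sqrt ((p + q) * (r + s)) := rfl

lemma core_est {f h : ℝ → ℂ} (hfm : Measurable f) (hhm : Measurable h) {Mf Mh : ℝ}
    (hfb : ∀ y ∈ Icc (-1:ℝ) 1, ‖f y‖ ≤ Mf) (hhb : ∀ y ∈ Icc (-1:ℝ) 1, ‖h y‖ ≤ Mh)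
    (hFTC : ∀ y ∈ Icc (-1:ℝ) 1, f y = f (-1) + ∫ s in (-1:ℝ)..y, h s)
    (hmean : (∫ s in (-1:ℝ)..1, f s) = 0) :
    (Linfy f) ^ 2 ≤ 2 * (L2y f * L2y h) := by
  have hm1 : (-1:ℝ) ∈ Icc (-1:ℝ) 1 := by norm_num
  have hu : uIcc (-1:ℝ) 1 = Icc (-1:ℝ) 1 := uIcc_of_le (by norm_num)
  have hIf : IntegrableOn f (Icc (-1:ℝ) 1) := by
    refine memLp_one_iff_integrable.1 (MemLp.of_bound hfm.aestronglyMeasurable Mf ?_)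
    exact (ae_restrict_iff' measurableSet_Icc).2 (Filter.Eventually.of_forall fun t ht =>
      hfb t ht)
  have hIh : IntegrableOn h (Icc (-1:ℝ) 1) := by
    refine memLp_one_iff_integrable.1 (MemLp.of_bound hhm.aestronglyMeasurable Mh ?_)
    exact (ae_restrict_iff' measurableSet_Icc).2 (Filter.Eventually.of_forall fun t ht =>
      hhb t ht)
  have hIIf : IntervalIntegrable f volume (-1) 1 := by
    apply IntegrableOn.intervalIntegrable; rwa [hu]
  have hIIhy : ∀ y ∈ Icc (-1:ℝ) 1, IntervalIntegrable h volume (-1) y := fun y hy =>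
    (hIh.mono_set (ordConnected_Icc.uIcc_subset hm1 hy)).intervalIntegrable
  -- continuity of f on Icc
  have hfc : ContinuousOn f (Icc (-1:ℝ) 1) := by
    have hprim : ContinuousOn (fun y => f (-1) + ∫ s in (-1:ℝ)..y, h s) (Icc (-1:ℝ) 1) := by
      refine continuousOn_const.add ?_
      have := intervalIntegral.continuousOn_primitive_interval (a := -1) (b := 1)
        (f := h) (μ := volume) (by rwa [hu])
      rwa [hu] at this
    exact hprim.congr hFTC
  -- real and imaginary FTC
  have hRFTC : ∀ y ∈ Icc (-1:ℝ) 1,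
      (f y).re = (f (-1)).re + ∫ s in (-1:ℝ)..y, (h s).re := by
    intro y hy
    rw [hFTC y hy, Complex.add_re]
    congr 1
    exact (Complex.reCLM.intervalIntegral_comp_comm (hIIhy y hy)).symm
  have hIFTC : ∀ y ∈ Icc (-1:ℝ) 1,
      (f y).im = (f (-1)).im + ∫ s in (-1:ℝ)..y, (h s).im := by
    intro y hy
    rw [hFTC y hy, Complex.add_im]
    congr 1
    exact (Complex.imCLM.intervalIntegral_comp_comm (hIIhy y hy)).symm
  -- zeros of re and im
  obtain ⟨y₁, hy₁, hz₁⟩ : ∃ z ∈ Icc (-1:ℝ) 1, (f z).re = 0 := by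
    refine exists_zero (g := fun z => (f z).re)
      (Complex.continuous_re.comp_continuousOn hfc) ?_
    have e := Complex.reCLM.intervalIntegral_comp_comm (μ := volume) hIIf
    simp only [Complex.reCLM_apply] at e
    rw [e, hmean, Complex.zero_re]
  obtain ⟨y₂, hy₂, hz₂⟩ : ∃ z ∈ Icc (-1:ℝ) 1, (f z).im = 0 := by
    refine exists_zero (g := fun z => (f z).im)
      (Complex.continuous_im.comp_continuousOn hfc) ?_
    have e := Complex.imCLM.intervalIntegral_comp_comm (μ := volume) hIIf
    simp only [Complex.imCLM_apply] at e
    rw [e, hmean, Complex.zero_im]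
  -- per-point bounds
  set aR := ∫ t in Icc (-1:ℝ) 1, (f t).re ^ 2 with haR
  set aI := ∫ t in Icc (-1:ℝ) 1, (f t).im ^ 2 with haI
  set bR := ∫ t in Icc (-1:ℝ) 1, (h t).re ^ 2 with hbR
  set bI := ∫ t in Icc (-1:ℝ) 1, (h t).im ^ 2 with hbI
  have haR0 : 0 ≤ aR := integral_nonneg fun t => sq_nonneg _
  have haI0 : 0 ≤ aI := integral_nonneg fun t => sq_nonneg _
  have hbR0 : 0 ≤ bR := integral_nonneg fun t => sq_nonneg _
  have hbI0 : 0 ≤ bI := integral_nonneg fun t => sq_nonneg _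
  have hboundR : ∀ y ∈ Icc (-1:ℝ) 1,
      (f y).re ^ 2 ≤ 2 * (aR ^ ((1:ℝ)/2) * bR ^ ((1:ℝ)/2)) :=
    fun y hy => real_bound (Complex.measurable_re.comp hfm) (Complex.measurable_re.comp hhm)
      (fun t ht => (Complex.abs_re_le_norm _).trans (hfb t ht))
      (fun t ht => (Complex.abs_re_le_norm _).trans (hhb t ht)) hRFTC hy₁ hy hz₁
  have hboundI : ∀ y ∈ Icc (-1:ℝ) 1,
      (f y).im ^ 2 ≤ 2 * (aI ^ ((1:ℝ)/2) * bI ^ ((1:ℝ)/2)) :=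
    fun y hy => real_bound (Complex.measurable_im.comp hfm) (Complex.measurable_im.comp hhm)
      (fun t ht => (Complex.abs_im_le_norm _).trans (hfb t ht))
      (fun t ht => (Complex.abs_im_le_norm _).trans (hhb t ht)) hIFTC hy₂ hy hz₂
  -- L2 norms as sums
  have hintR : IntegrableOn (fun t => (f t).re ^ 2) (Icc (-1:ℝ) 1) := by
    refine memLp_one_iff_integrable.1 (MemLp.of_bound
      (((Complex.measurable_re.comp hfm).pow_const 2).aestronglyMeasurable) (Mf ^ 2) ?_)
    refine (ae_restrict_iff' measurableSet_Icc).2 (Filter.Eventually.of_forall fun t ht => ?_)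
    have h1 : |(f t).re| ≤ Mf := (Complex.abs_re_le_norm _).trans (hfb t ht)
    have : (f t).re ^ 2 ≤ Mf ^ 2 := by nlinarith [abs_nonneg (f t).re, sq_abs (f t).re]
    rw [Real.norm_eq_abs, abs_of_nonneg (sq_nonneg _)]
    exact this
  have hintI : IntegrableOn (fun t => (f t).im ^ 2) (Icc (-1:ℝ) 1) := by
    refine memLp_one_iff_integrable.1 (MemLp.of_bound
      (((Complex.measurable_im.comp hfm).pow_const 2).aestronglyMeasurable) (Mf ^ 2) ?_)
    refine (ae_restrict_iff' measurableSet_Icc).2 (Filter.Eventually.of_forall fun t ht => ?_)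
    have h1 : |(f t).im| ≤ Mf := (Complex.abs_im_le_norm _).trans (hfb t ht)
    have : (f t).im ^ 2 ≤ Mf ^ 2 := by nlinarith [abs_nonneg (f t).im, sq_abs (f t).im]
    rw [Real.norm_eq_abs, abs_of_nonneg (sq_nonneg _)]
    exact this
  have hintRh : IntegrableOn (fun t => (h t).re ^ 2) (Icc (-1:ℝ) 1) := by
    refine memLp_one_iff_integrable.1 (MemLp.of_bound
      (((Complex.measurable_re.comp hhm).pow_const 2).aestronglyMeasurable) (Mh ^ 2) ?_)
    refine (ae_restrict_iff' measurableSet_Icc).2 (Filter.Eventually.of_forall fun t ht => ?_)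
    have h1 : |(h t).re| ≤ Mh := (Complex.abs_re_le_norm _).trans (hhb t ht)
    have : (h t).re ^ 2 ≤ Mh ^ 2 := by nlinarith [abs_nonneg (h t).re, sq_abs (h t).re]
    rw [Real.norm_eq_abs, abs_of_nonneg (sq_nonneg _)]
    exact this
  have hintIh : IntegrableOn (fun t => (h t).im ^ 2) (Icc (-1:ℝ) 1) := by
    refine memLp_one_iff_integrable.1 (MemLp.of_bound
      (((Complex.measurable_im.comp hhm).pow_const 2).aestronglyMeasurable) (Mh ^ 2) ?_)
    refine (ae_restrict_iff' measurableSet_Icc).2 (Filter.Eventually.of_forall fun t ht => ?_)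
    have h1 : |(h t).im| ≤ Mh := (Complex.abs_im_le_norm _).trans (hhb t ht)
    have : (h t).im ^ 2 ≤ Mh ^ 2 := by nlinarith [abs_nonneg (h t).im, sq_abs (h t).im]
    rw [Real.norm_eq_abs, abs_of_nonneg (sq_nonneg _)]
    exact this
  have hL2f : L2y f = Real.sqrt (aR + aI) := by
    rw [L2y, ← Real.sqrt_eq_rpow]
    congr 1
    rw [haR, haI, ← integral_add hintR hintI]
    refine setIntegral_congr_fun measurableSet_Icc fun t _ => ?_
    rw [Complex.sq_norm, Complex.normSq_apply]
    ring
  have hL2h : L2y h = Real.sqrt (bR + bI) := by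
    rw [L2y, ← Real.sqrt_eq_rpow]
    congr 1
    rw [hbR, hbI, ← integral_add hintRh hintIh]
    refine setIntegral_congr_fun measurableSet_Icc fun t _ => ?_
    rw [Complex.sq_norm, Complex.normSq_apply]
    ring
  -- combine
  have hptwise : ∀ y ∈ Icc (-1:ℝ) 1, ‖f y‖ ^ 2 ≤ 2 * (L2y f * L2y h) := by
    intro y hy
    have h1 := hboundR y hy
    have h2 := hboundI y hy
    have hnorm : ‖f y‖ ^ 2 = (f y).re ^ 2 + (f y).im ^ 2 := by
      rw [Complex.sq_norm, Complex.normSq_apply]; ring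
    have hs : aR ^ ((1:ℝ)/2) * bR ^ ((1:ℝ)/2) + aI ^ ((1:ℝ)/2) * bI ^ ((1:ℝ)/2)
        ≤ Real.sqrt (aR + aI) * Real.sqrt (bR + bI) := by
      rw [← Real.sqrt_eq_rpow, ← Real.sqrt_eq_rpow, ← Real.sqrt_eq_rpow, ← Real.sqrt_eq_rpow]
      exact sqrt_ineq haR0 haI0 hbR0 hbI0
    rw [hnorm, hL2f, hL2h]
    linarith
  have hLinf : Linfy f ≤ Real.sqrt (2 * (L2y f * L2y h)) := by
    refine Real.iSup_le (fun y => ?_) (Real.sqrt_nonneg _)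
    exact Real.le_sqrt_of_sq_le (hptwise y y.2)
  have hLinf0 : 0 ≤ Linfy f := Real.iSup_nonneg fun y => norm_nonneg _
  calc (Linfy f) ^ 2 ≤ Real.sqrt (2 * (L2y f * L2y h)) ^ 2 := by
        exact pow_le_pow_left₀ hLinf0 hLinf 2
    _ = 2 * (L2y f * L2y h) := Real.sq_sqrt (mul_nonneg (by norm_num) (mul_nonneg (L2y_nonneg f) (L2y_nonneg h)))

theorem lemma33_first (m ε : ℝ) (hm : 1 < m) (hε : ε ∈ Set.Ioo (0 : ℝ) (1 / 12)) :
    ∃ C : ℝ, 0 < C ∧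
      ∀ (ν c t : ℝ), ν ∈ Set.Ioo (0 : ℝ) 1 → 0 < c → 0 ≤ t →
      ∀ (ω dω d2ω φ dφ d2φ : ℝ → ℝ → ℂ),
      Measurable (Function.uncurry ω) → Measurable (Function.uncurry dω) →
      Measurable (Function.uncurry d2ω) → Measurable (Function.uncurry φ) →
      Measurable (Function.uncurry dφ) → Measurable (Function.uncurry d2φ) →
      (∀ k : ℝ, ω k (-1) = 0 ∧ ω k 1 = 0) →
      (∀ k : ℝ, ∀ y ∈ Set.Icc (-1 : ℝ) 1,
        ω k y = ω k (-1) + ∫ s in (-1 : ℝ)..y, dω k s) →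
      (∀ k : ℝ, ∀ y ∈ Set.Icc (-1 : ℝ) 1,
        dω k y = dω k (-1) + ∫ s in (-1 : ℝ)..y, d2ω k s) →
      (∀ k : ℝ, MemLp (d2ω k) 2 (volume.restrict (Set.Icc (-1 : ℝ) 1))) →
      (∀ k : ℝ, k ≠ 0 → φ k (-1) = 0 ∧ φ k 1 = 0) →
      (∀ k : ℝ, k ≠ 0 → ∀ y ∈ Set.Icc (-1 : ℝ) 1,
        φ k y = φ k (-1) + ∫ s in (-1 : ℝ)..y, dφ k s) →
      (∀ k : ℝ, k ≠ 0 → ∀ y ∈ Set.Icc (-1 : ℝ) 1,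
        dφ k y = dφ k (-1) + ∫ s in (-1 : ℝ)..y, d2φ k s) →
      (∀ k : ℝ, k ≠ 0 → ∀ y ∈ Set.Icc (-1 : ℝ) 1,
        d2φ k y - (k : ℂ) ^ 2 * φ k y = ω k y) →
      EEn ν m ε c t ω dω ≠ ⊤ → D1n ν m ε c t ω dω ≠ ⊤ → D2n ν m ε c t dω d2ω ≠ ⊤ →
      D3n ν m ε c t ω ≠ ⊤ → D4n ν m ε c t φ dφ ≠ ⊤ → D5n ν m ε c t dφ d2φ ≠ ⊤ →
      ∫⁻ l in {l : ℝ | ν ≤ |l|},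
          ENNReal.ofReal (Wf ν m ε c t l * (|l| ^ ((7 : ℝ) / 3) * (Linfy (dφ l)) ^ 2)) ≤
        ENNReal.ofReal (C * ν ^ (-(2 : ℝ) / 3)) * D5n ν m ε c t dφ d2φ := by
  classical
  refine ⟨1, one_pos, ?_⟩
  intro ν c t hν hc ht ω dω d2ω φ dφ d2φ hmω hmdω hmd2ω hmφ hmdφ hmd2φ hωbc hωFTC hdωFTC
    hd2ωL2 hφbc hφFTC hdφFTC hPoisson hE hD1 hD2 hD3 hD4 hD5
  obtain ⟨hν0, hν1⟩ := hν
  have hm1 : (-1:ℝ) ∈ Icc (-1:ℝ) 1 := by norm_num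
  have hp1 : (1:ℝ) ∈ Icc (-1:ℝ) 1 := by norm_num
  have hS : MeasurableSet {l : ℝ | ν ≤ |l|} :=
    measurableSet_le measurable_const (continuous_abs.measurable)
  -- pointwise estimate
  have hpoint : ∀ l ∈ {l : ℝ | ν ≤ |l|},
      ENNReal.ofReal (Wf ν m ε c t l * (|l| ^ ((7:ℝ)/3) * (Linfy (dφ l)) ^ 2)) ≤
      ENNReal.ofReal (ν ^ (-(2:ℝ)/3)) *
        ENNReal.ofReal (Wf ν m ε c t l * (alphf ν l * l ^ 2 * gradSq l (dφ l) (d2φ l))) := by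
    intro l hl
    have hl' : ν ≤ |l| := hl
    have hlabs : 0 < |l| := lt_of_lt_of_le hν0 hl'
    have hl0 : l ≠ 0 := fun h => by simp [h] at hlabs
    -- key estimate : |l| * Linfy² ≤ gradSq
    have key : |l| * (Linfy (dφ l)) ^ 2 ≤ gradSq l (dφ l) (d2φ l) := by
      by_cases hbdd : BddAbove (range fun y : Icc (-1:ℝ) 1 => ‖dφ l (y : ℝ)‖)
      · obtain ⟨M, hM⟩ := hbdd
        have hMb : ∀ y ∈ Icc (-1:ℝ) 1, ‖dφ l y‖ ≤ M := fun y hy => hM ⟨⟨y, hy⟩, rfl⟩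
        have hM0 : 0 ≤ M := le_trans (norm_nonneg _) (hMb (-1) hm1)
        have msdφ : Measurable (dφ l) := hmdφ.comp measurable_prodMk_left
        have msd2φ : Measurable (d2φ l) := hmd2φ.comp measurable_prodMk_left
        -- d2ω ∈ L¹
        have hd2ω1 : IntegrableOn (d2ω l) (Icc (-1:ℝ) 1) := (hd2ωL2 l).integrable one_le_two
        -- dω bound
        set Kd : ℝ := ‖dω l (-1)‖ + ∫ s in Icc (-1:ℝ) 1, ‖d2ω l s‖ with hKd
        have hKd0 : 0 ≤ Kd :=
          add_nonneg (norm_nonneg _) (integral_nonneg fun s => norm_nonneg _)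
        have hdωb : ∀ y ∈ Icc (-1:ℝ) 1, ‖dω l y‖ ≤ Kd := by
          intro y hy
          rw [hdωFTC l y hy]
          refine (norm_add_le _ _).trans (add_le_add_right ?_ _)
          refine (intervalIntegral.norm_integral_le_integral_norm_uIoc).trans ?_
          rw [uIoc_of_le hy.1]
          refine setIntegral_mono_set hd2ω1.norm
            (Filter.Eventually.of_forall fun s => norm_nonneg _)
            (HasSubset.Subset.eventuallyLE fun x hx => ⟨hx.1.le, hx.2.trans hy.2⟩)
        -- ω bound
        have hωb : ∀ y ∈ Icc (-1:ℝ) 1, ‖ω l y‖ ≤ 2 * Kd := by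
          intro y hy
          rw [hωFTC l y hy, (hωbc l).1, zero_add]
          have := intervalIntegral.norm_integral_le_of_norm_le_const
            (a := (-1:ℝ)) (b := y) (C := Kd) (f := dω l) (fun x hx => by
              rw [uIoc_of_le hy.1] at hx
              exact hdωb x ⟨hx.1.le, hx.2.trans hy.2⟩)
          refine this.trans ?_
          have : |y - (-1)| ≤ 2 := by
            rw [abs_of_nonneg (by linarith [hy.1])]
            linarith [hy.2]
          nlinarith
        -- φ bound
        have hφb : ∀ y ∈ Icc (-1:ℝ) 1, ‖φ l y‖ ≤ 2 * M := by
          intro y hy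
          rw [hφFTC l hl0 y hy, (hφbc l hl0).1, zero_add]
          have := intervalIntegral.norm_integral_le_of_norm_le_const
            (a := (-1:ℝ)) (b := y) (C := M) (f := dφ l) (fun x hx => by
              rw [uIoc_of_le hy.1] at hx
              exact hMb x ⟨hx.1.le, hx.2.trans hy.2⟩)
          refine this.trans ?_
          have : |y - (-1)| ≤ 2 := by
            rw [abs_of_nonneg (by linarith [hy.1])]
            linarith [hy.2]
          nlinarith
        -- d2φ bound
        have hd2φb : ∀ y ∈ Icc (-1:ℝ) 1, ‖d2φ l y‖ ≤ 2 * Kd + l ^ 2 * (2 * M) := by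
          intro y hy
          have hp : d2φ l y = ω l y + (l:ℂ) ^ 2 * φ l y := by
            have := hPoisson l hl0 y hy
            linear_combination this
          rw [hp]
          refine (norm_add_le _ _).trans ?_
          have h2 : ‖(l:ℂ) ^ 2 * φ l y‖ ≤ l ^ 2 * (2 * M) := by
            rw [norm_mul, norm_pow, Complex.norm_real, Real.norm_eq_abs, sq_abs]
            exact mul_le_mul_of_nonneg_left (hφb y hy) (sq_nonneg l)
          linarith [hωb y hy]
        -- mean zero of dφ l
        have hmean : (∫ s in (-1:ℝ)..1, dφ l s) = 0 := by
          have := hφFTC l hl0 1 hp1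
          rw [(hφbc l hl0).1, (hφbc l hl0).2] at this
          simpa using this.symm
        have hcore := core_est msdφ msd2φ hMb hd2φb (hdφFTC l hl0) hmean
        rw [gradSq]
        nlinarith [L2y_nonneg (dφ l), L2y_nonneg (d2φ l),
          sq_nonneg (|l| * L2y (dφ l) - L2y (d2φ l)), sq_abs l, abs_nonneg l,
          sq_nonneg (Linfy (dφ l))]
      · have hzero : Linfy (dφ l) = 0 := Real.iSup_of_not_bddAbove hbdd
        rw [hzero, gradSq]
        have h00 : |l| * (0:ℝ) ^ 2 = 0 := by ring
        rw [h00]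
        positivity
    -- weight algebra
    have hWnn : 0 ≤ Wf ν m ε c t l := by
      rw [Wf]
      positivity
    have halph : alphf ν l = ν ^ ((2:ℝ)/3) * |l| ^ (-((2:ℝ)/3)) := if_pos hl'
    have hid : ν ^ (-(2:ℝ)/3) * (alphf ν l * l ^ 2) = |l| ^ ((4:ℝ)/3) := by
      rw [halph]
      have e1 : l ^ 2 = |l| ^ ((2:ℕ):ℝ) := by
        rw [Real.rpow_natCast, sq_abs]
      rw [e1]
      rw [show ν ^ (-(2:ℝ)/3) * (ν ^ ((2:ℝ)/3) * |l| ^ (-((2:ℝ)/3)) * |l| ^ ((2:ℕ):ℝ))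
          = (ν ^ (-(2:ℝ)/3) * ν ^ ((2:ℝ)/3)) * (|l| ^ (-((2:ℝ)/3)) * |l| ^ ((2:ℕ):ℝ)) by ring,
        ← Real.rpow_add hν0, ← Real.rpow_add hlabs]
      norm_num
    have hsplit7 : |l| ^ ((7:ℝ)/3) = |l| ^ ((4:ℝ)/3) * |l| := by
      rw [show (7:ℝ)/3 = 4/3 + 1 by norm_num, Real.rpow_add hlabs, Real.rpow_one]
    have hre : Wf ν m ε c t l * (|l| ^ ((7:ℝ)/3) * (Linfy (dφ l)) ^ 2)
        ≤ ν ^ (-(2:ℝ)/3) * (Wf ν m ε c t l * (alphf ν l * l ^ 2 * gradSq l (dφ l) (d2φ l))) := by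
      calc Wf ν m ε c t l * (|l| ^ ((7:ℝ)/3) * (Linfy (dφ l)) ^ 2)
          = Wf ν m ε c t l * (|l| ^ ((4:ℝ)/3) * (|l| * (Linfy (dφ l)) ^ 2)) := by
            rw [hsplit7]; ring
        _ ≤ Wf ν m ε c t l * (|l| ^ ((4:ℝ)/3) * gradSq l (dφ l) (d2φ l)) := by
            refine mul_le_mul_of_nonneg_left ?_ hWnn
            exact mul_le_mul_of_nonneg_left key (Real.rpow_nonneg (abs_nonneg l) _)
        _ = ν ^ (-(2:ℝ)/3) * (Wf ν m ε c t l * (alphf ν l * l ^ 2 * gradSq l (dφ l) (d2φ l))) := by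
            rw [← hid]; ring
    calc ENNReal.ofReal (Wf ν m ε c t l * (|l| ^ ((7:ℝ)/3) * (Linfy (dφ l)) ^ 2))
        ≤ ENNReal.ofReal (ν ^ (-(2:ℝ)/3)
            * (Wf ν m ε c t l * (alphf ν l * l ^ 2 * gradSq l (dφ l) (d2φ l)))) :=
          ENNReal.ofReal_le_ofReal hre
      _ = ENNReal.ofReal (ν ^ (-(2:ℝ)/3)) *
            ENNReal.ofReal (Wf ν m ε c t l * (alphf ν l * l ^ 2 * gradSq l (dφ l) (d2φ l))) :=
          ENNReal.ofReal_mul (Real.rpow_nonneg hν0.le _)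
  -- integrate
  calc ∫⁻ l in {l : ℝ | ν ≤ |l|},
        ENNReal.ofReal (Wf ν m ε c t l * (|l| ^ ((7:ℝ)/3) * (Linfy (dφ l)) ^ 2))
      ≤ ∫⁻ l in {l : ℝ | ν ≤ |l|}, ENNReal.ofReal (ν ^ (-(2:ℝ)/3)) *
          ENNReal.ofReal (Wf ν m ε c t l * (alphf ν l * l ^ 2 * gradSq l (dφ l) (d2φ l))) :=
        setLIntegral_mono' hS hpoint
    _ ≤ ∫⁻ l, ENNReal.ofReal (ν ^ (-(2:ℝ)/3)) *
          ENNReal.ofReal (Wf ν m ε c t l * (alphf ν l * l ^ 2 * gradSq l (dφ l) (d2φ l))) :=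
        setLIntegral_le_lintegral _ _
    _ = ENNReal.ofReal (ν ^ (-(2:ℝ)/3)) * D5n ν m ε c t dφ d2φ :=
        lintegral_const_mul' _ _ ENNReal.ofReal_ne_top
    _ = ENNReal.ofReal (1 * ν ^ (-(2:ℝ)/3)) * D5n ν m ε c t dφ d2φ := by rw [one_mul]


end
end

section
/- Under the standing assumptions, ∫_ℝ ‖∂_y²φ_ℓ‖_{L^∞_y([-1,1])} dℓ ≲ ν^{-1/4}·𝓔^{1/4}·𝓓₁^{1/4}. (Second estimate of Lemma 3.3.) -/
open MeasureTheory Set Filter Topology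
open scoped ENNReal

noncomputable section

namespace L33

open intervalIntegral

lemma L2y_nonneg (f : ℝ → ℂ) : 0 ≤ L2y f :=
  Real.rpow_nonneg (integral_nonneg fun y => by positivity) _

lemma L2y_sq (f : ℝ → ℂ) : (L2y f) ^ 2 = ∫ y in Set.Icc (-1 : ℝ) 1, ‖f y‖ ^ 2 := by
  have h : (0:ℝ) ≤ ∫ y in Set.Icc (-1 : ℝ) 1, ‖f y‖ ^ 2 :=
    integral_nonneg fun y => by positivity
  rw [L2y, ← Real.rpow_natCast (_ ^ ((1:ℝ)/2)) 2, ← Real.rpow_mul h]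
  norm_num

lemma rpow4 (x : ℝ) (hx : 0 ≤ x) : (x ^ ((1:ℝ)/4)) ^ (4:ℕ) = x := by
  rw [← Real.rpow_natCast (x ^ ((1:ℝ)/4)) 4, ← Real.rpow_mul hx]
  norm_num

lemma rpow24 (x : ℝ) (hx : 0 ≤ x) : (x ^ ((1:ℝ)/2)) ^ (4:ℕ) = x ^ 2 := by
  rw [← Real.rpow_natCast (x ^ ((1:ℝ)/2)) 4, ← Real.rpow_mul hx, ← Real.rpow_natCast x 2]
  norm_num

lemma icc_finite : (volume (Set.Icc (-1:ℝ) 1)) ≠ ⊤ := by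
  simp [Real.volume_Icc]

lemma memL2_of_continuousOn {F : ℝ → ℂ} (hF : ContinuousOn F (Set.Icc (-1:ℝ) 1)) :
    MemLp (fun y => ‖F y‖) (ENNReal.ofReal 2)
      (volume.restrict (Set.Icc (-1:ℝ) 1)) := by
  haveI : IsFiniteMeasure (volume.restrict (Set.Icc (-1:ℝ) 1)) :=
    ⟨by rw [Measure.restrict_apply_univ]; exact icc_finite.lt_top⟩
  obtain ⟨C, hC⟩ := (isCompact_Icc (a := (-1:ℝ)) (b := 1)).exists_bound_of_continuousOn hF
  have hmeas : AEStronglyMeasurable (fun y => ‖F y‖)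
      (volume.restrict (Set.Icc (-1:ℝ) 1)) :=
    (hF.aestronglyMeasurable measurableSet_Icc).norm
  have hb : ∀ᵐ y ∂(volume.restrict (Set.Icc (-1:ℝ) 1)), ‖‖F y‖‖ ≤ C := by
    rw [ae_restrict_iff' measurableSet_Icc]
    exact ae_of_all _ fun y hy => by simpa using hC y hy
  exact (memLp_top_of_bound hmeas C hb).mono_exponent le_top

lemma cauchy_schwarz {F G : ℝ → ℂ} (hF : ContinuousOn F (Set.Icc (-1:ℝ) 1))
    (hG : ContinuousOn G (Set.Icc (-1:ℝ) 1)) :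
    ∫ y in Set.Icc (-1:ℝ) 1, ‖F y‖ * ‖G y‖ ≤ L2y F * L2y G := by
  have hpq : Real.HolderConjugate 2 2 := Real.holderConjugate_iff.mpr ⟨one_lt_two, by norm_num⟩
  have h := MeasureTheory.integral_mul_le_Lp_mul_Lq_of_nonneg
    (μ := volume.restrict (Set.Icc (-1:ℝ) 1)) hpq
    (ae_of_all _ fun y => norm_nonneg (F y)) (ae_of_all _ fun y => norm_nonneg (G y))
    (memL2_of_continuousOn hF) (memL2_of_continuousOn hG)
  have e1 : ∀ (H : ℝ → ℂ) (y : ℝ), ‖H y‖ ^ (2:ℝ) = ‖H y‖ ^ (2:ℕ) := fun H y => by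
    rw [← Real.rpow_natCast ‖H y‖ 2]; norm_num
  simp only [e1] at h
  rw [L2y, L2y]
  exact h

lemma hasDerivAt_cre {p : ℝ → ℂ} {p' : ℂ} {x : ℝ} (hp : HasDerivAt p p' x) :
    HasDerivAt (fun y => (p y).re) p'.re x :=
  Complex.reCLM.hasFDerivAt.comp_hasDerivAt x hp

lemma hasDerivAt_cim {p : ℝ → ℂ} {p' : ℂ} {x : ℝ} (hp : HasDerivAt p p' x) :
    HasDerivAt (fun y => (p y).im) p'.im x :=
  Complex.imCLM.hasFDerivAt.comp_hasDerivAt x hp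

/-- derivative of `y ↦ Re(conj (p y) * q y)` -/
lemma hasDerivAt_reconj {p q : ℝ → ℂ} {p' q' : ℂ} {x : ℝ}
    (hp : HasDerivAt p p' x) (hq : HasDerivAt q q' x) :
    HasDerivAt (fun y => ((starRingEnd ℂ) (p y) * q y).re)
      (((starRingEnd ℂ) p' * q x).re + ((starRingEnd ℂ) (p x) * q' ).re) x := by
  have h : HasDerivAt
      (fun y => (p y).re * (q y).re + (p y).im * (q y).im)
      ((p'.re * (q x).re + (p x).re * q'.re) + (p'.im * (q x).im + (p x).im * q'.im)) x :=
    ((hasDerivAt_cre hp).mul (hasDerivAt_cre hq)).add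
      ((hasDerivAt_cim hp).mul (hasDerivAt_cim hq))
  have e : (fun y => ((starRingEnd ℂ) (p y) * q y).re)
      = fun y => (p y).re * (q y).re + (p y).im * (q y).im := by
    funext y; simp [Complex.mul_re]
  rw [e]
  convert h using 1
  simp [Complex.mul_re]; ring

lemma primitive_contOn {fc : ℝ → ℂ} (h : IntegrableOn fc (Set.Icc (-1:ℝ) 1)) :
    ContinuousOn (fun y => ∫ s in (-1:ℝ)..y, fc s) (Set.Icc (-1:ℝ) 1) := by
  have : uIcc (-1:ℝ) 1 = Set.Icc (-1:ℝ) 1 := uIcc_of_le (by norm_num)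
  rw [← this] at h ⊢
  exact continuousOn_primitive_interval h

lemma primitive_hasDerivAt {fc : ℝ → ℂ} (hm : Measurable fc)
    (hc : ContinuousOn fc (Set.Icc (-1:ℝ) 1)) {x : ℝ} (hx : x ∈ Set.Ioo (-1:ℝ) 1) :
    HasDerivAt (fun y => ∫ s in (-1:ℝ)..y, fc s) (fc x) x := by
  apply intervalIntegral.integral_hasDerivAt_right
  · apply ContinuousOn.intervalIntegrable
    apply hc.mono
    rw [uIcc_of_le hx.1.le]
    exact Set.Icc_subset_Icc le_rfl hx.2.le
  · exact hm.stronglyMeasurable.stronglyMeasurableAtFilter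
  · exact hc.continuousAt (Icc_mem_nhds hx.1 hx.2)

/-- If `f` agrees on `Icc (-1) 1` with `c + primitive of fc`, then at interior points
`f` has derivative `fc x`. -/
lemma rep_hasDerivAt {f fc : ℝ → ℂ} (hm : Measurable fc)
    (hc : ContinuousOn fc (Set.Icc (-1:ℝ) 1))
    (hrep : ∀ y ∈ Set.Icc (-1:ℝ) 1, f y = f (-1) + ∫ s in (-1:ℝ)..y, fc s)
    {x : ℝ} (hx : x ∈ Set.Ioo (-1:ℝ) 1) :
    HasDerivAt f (fc x) x := by
  have h : HasDerivAt (fun y => f (-1) + ∫ s in (-1:ℝ)..y, fc s) (fc x) x :=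
    (primitive_hasDerivAt hm hc hx).const_add _
  apply h.congr_of_eventuallyEq
  filter_upwards [Icc_mem_nhds hx.1 hx.2] with y hy
  exact hrep y hy

lemma rep_continuousOn {f fc : ℝ → ℂ} (hc : IntegrableOn fc (Set.Icc (-1:ℝ) 1))
    (hrep : ∀ y ∈ Set.Icc (-1:ℝ) 1, f y = f (-1) + ∫ s in (-1:ℝ)..y, fc s) :
    ContinuousOn f (Set.Icc (-1:ℝ) 1) := by
  apply ContinuousOn.congr (continuousOn_const.add (primitive_contOn hc))
  intro y hy; exact hrep y hy

lemma reconj_self (z : ℂ) : ((starRingEnd ℂ) z * z).re = ‖z‖ ^ 2 := by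
  rw [Complex.sq_norm, Complex.normSq_apply, Complex.mul_re]
  simp

lemma re_conj_le (z w : ℂ) : ((starRingEnd ℂ) z * w).re ≤ ‖z‖ * ‖w‖ := by
  refine (Complex.re_le_norm _).trans ?_
  simp

lemma agmon {f fc : ℝ → ℂ} (hm : Measurable fc)
    (hc : ContinuousOn fc (Set.Icc (-1:ℝ) 1)) (h0 : f (-1) = 0)
    (hrep : ∀ y ∈ Set.Icc (-1:ℝ) 1, f y = f (-1) + ∫ s in (-1:ℝ)..y, fc s) :
    ∀ y ∈ Set.Icc (-1:ℝ) 1, ‖f y‖ ^ 2 ≤ 2 * (L2y f * L2y fc) := by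
  intro y hy
  set F := fun t : ℝ => ∫ s in (-1:ℝ)..t, fc s with hFdef
  have hfF : ∀ t ∈ Set.Icc (-1:ℝ) 1, f t = F t := fun t ht => by
    rw [hrep t ht, h0, zero_add]
  have hFc : ContinuousOn F (Set.Icc (-1:ℝ) 1) := primitive_contOn hc.integrableOn_Icc
  have hFd : ∀ x ∈ Set.Ioo (-1:ℝ) 1, HasDerivAt F (fc x) x := fun x hx =>
    primitive_hasDerivAt hm hc hx
  -- the product ‖F‖ ‖fc‖ is continuous; integrable on Icc
  have hprodc : ContinuousOn (fun s => ‖F s‖ * ‖fc s‖) (Set.Icc (-1:ℝ) 1) :=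
    hFc.norm.mul hc.norm
  -- derivative integrand
  set u' : ℝ → ℝ := fun s => 2 * ((starRingEnd ℂ) (F s) * fc s).re with hu'def
  have hu'c : ContinuousOn u' (Set.Icc (-1:ℝ) 1) := by
    apply continuousOn_const.mul
    exact Complex.continuous_re.comp_continuousOn
      ((continuous_star.comp_continuousOn hFc).mul hc)
  have key : ‖F y‖ ^ 2 = ∫ s in (-1:ℝ)..y, u' s := by
    have hsub : Set.Icc (-1:ℝ) y ⊆ Set.Icc (-1:ℝ) 1 := Set.Icc_subset_Icc le_rfl hy.2
    have hcontu : ContinuousOn (fun t => ‖F t‖ ^ 2) (Set.Icc (-1:ℝ) y) :=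
      ((hFc.mono hsub).norm.pow 2)
    have hder : ∀ x ∈ Set.Ioo (-1:ℝ) y,
        HasDerivWithinAt (fun t => ‖F t‖ ^ 2) (u' x) (Set.Ioi x) x := by
      intro x hx
      have hx1 : x ∈ Set.Ioo (-1:ℝ) 1 := ⟨hx.1, lt_of_lt_of_le hx.2 hy.2⟩
      have h1 := hasDerivAt_reconj (hFd x hx1) (hFd x hx1)
      have e : (fun t => ‖F t‖ ^ 2) = fun t => ((starRingEnd ℂ) (F t) * F t).re := by
        funext t; rw [reconj_self]
      rw [e]
      have e2 : u' x = ((starRingEnd ℂ) (fc x) * F x).re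
          + ((starRingEnd ℂ) (F x) * fc x).re := by
        simp only [hu'def, Complex.mul_re, Complex.conj_re, Complex.conj_im]
        ring
      rw [e2]
      exact h1.hasDerivWithinAt
    have hint : IntervalIntegrable u' volume (-1) y := by
      apply ContinuousOn.intervalIntegrable
      rw [uIcc_of_le hy.1]
      exact hu'c.mono hsub
    have hFTC := intervalIntegral.integral_eq_sub_of_hasDeriv_right_of_le hy.1
      hcontu hder hint
    rw [hFTC]
    simp [hFdef, intervalIntegral.integral_same]
  -- bound the integral
  have hIoc : Set.Ioc (-1:ℝ) y ⊆ Set.Icc (-1:ℝ) 1 :=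
    fun s hs => ⟨hs.1.le, hs.2.trans hy.2⟩
  have step1 : ∫ s in (-1:ℝ)..y, u' s = ∫ s in Set.Ioc (-1:ℝ) y, u' s :=
    intervalIntegral.integral_of_le hy.1
  have hbig_int : IntegrableOn (fun s => 2 * (‖F s‖ * ‖fc s‖)) (Set.Icc (-1:ℝ) 1) :=
    (continuousOn_const.mul hprodc).integrableOn_Icc
  have step2 : ∫ s in Set.Ioc (-1:ℝ) y, u' s
      ≤ ∫ s in Set.Ioc (-1:ℝ) y, 2 * (‖F s‖ * ‖fc s‖) := by
    apply setIntegral_mono_on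
    · exact (hu'c.integrableOn_Icc).mono_set hIoc
    · exact hbig_int.mono_set hIoc
    · exact measurableSet_Ioc
    · intro s hs
      have := re_conj_le (F s) (fc s)
      simp only [hu'def]
      nlinarith
  have step3 : ∫ s in Set.Ioc (-1:ℝ) y, 2 * (‖F s‖ * ‖fc s‖)
      ≤ ∫ s in Set.Icc (-1:ℝ) 1, 2 * (‖F s‖ * ‖fc s‖) := by
    apply setIntegral_mono_set hbig_int
    · exact ae_of_all _ fun s => by positivity
    · exact HasSubset.Subset.eventuallyLE hIoc
  have step4 : ∫ s in Set.Icc (-1:ℝ) 1, 2 * (‖F s‖ * ‖fc s‖)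
      ≤ 2 * (L2y F * L2y fc) := by
    rw [MeasureTheory.integral_const_mul]
    have := cauchy_schwarz hFc hc
    linarith
  have hL2 : L2y F = L2y f := by
    unfold L2y
    congr 1
    apply setIntegral_congr_fun measurableSet_Icc
    intro t ht
    simp only [hfF t ht]
  rw [hfF y hy, key, step1]
  rw [hL2] at step4
  linarith

/-- Energy identity estimate for the Poisson problem. -/
lemma energy (k : ℝ) {φ dφ ω : ℝ → ℂ}
    (hφc : ContinuousOn φ (Set.Icc (-1:ℝ) 1))
    (hdφc : ContinuousOn dφ (Set.Icc (-1:ℝ) 1))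
    (hωc : ContinuousOn ω (Set.Icc (-1:ℝ) 1))
    (hφ1 : φ (-1) = 0) (hφ2 : φ 1 = 0)
    (hdφ : ∀ x ∈ Set.Ioo (-1:ℝ) 1, HasDerivAt φ (dφ x) x)
    (hd2φ : ∀ x ∈ Set.Ioo (-1:ℝ) 1, HasDerivAt dφ (ω x + (k:ℂ)^2 * φ x) x) :
    (L2y dφ)^2 + k^2 * (L2y φ)^2 ≤ L2y ω * L2y φ := by
  set I₁ := Set.Icc (-1:ℝ) 1
  -- G y = Re (conj (dφ y) * φ y)
  set G : ℝ → ℝ := fun y => ((starRingEnd ℂ) (dφ y) * φ y).re with hGdef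
  set G' : ℝ → ℝ := fun x =>
    ((starRingEnd ℂ) (ω x) * φ x).re + k^2 * ‖φ x‖^2 + ‖dφ x‖^2 with hG'def
  have hGc : ContinuousOn G I₁ :=
    Complex.continuous_re.comp_continuousOn
      ((continuous_star.comp_continuousOn hdφc).mul hφc)
  have hG'c : ContinuousOn G' I₁ := by
    apply ContinuousOn.add
    apply ContinuousOn.add
    · exact Complex.continuous_re.comp_continuousOn
        ((continuous_star.comp_continuousOn hωc).mul hφc)
    · exact continuousOn_const.mul (hφc.norm.pow 2)
    · exact hdφc.norm.pow 2
  have hder : ∀ x ∈ Set.Ioo (-1:ℝ) 1, HasDerivWithinAt G (G' x) (Set.Ioi x) x := by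
    intro x hx
    have h1 := hasDerivAt_reconj (hd2φ x hx) (hdφ x hx)
    have e2 : ((starRingEnd ℂ) ((k:ℂ)^2) * (starRingEnd ℂ) (φ x) * φ x).re
        = k^2 * ‖φ x‖^2 := by
      have hk : (starRingEnd ℂ) ((k:ℂ)^2) = ((k:ℂ)^2) := by
        simp [← Complex.ofReal_pow]
      rw [hk, mul_assoc, ← Complex.ofReal_pow, Complex.re_ofReal_mul, reconj_self]
    have e : ((starRingEnd ℂ) (ω x + (k:ℂ)^2 * φ x) * φ x).re
        + ((starRingEnd ℂ) (dφ x) * dφ x).re = G' x := by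
      simp only [hG'def, map_add, map_mul, add_mul, Complex.add_re, reconj_self, e2]
    rw [← e]
    exact h1.hasDerivWithinAt
  have hint : IntervalIntegrable G' volume (-1) 1 := by
    apply ContinuousOn.intervalIntegrable
    rwa [uIcc_of_le (by norm_num : (-1:ℝ) ≤ 1)]
  have hFTC := intervalIntegral.integral_eq_sub_of_hasDeriv_right_of_le
    (by norm_num : (-1:ℝ) ≤ 1) hGc hder hint
  have hG0 : G 1 - G (-1) = 0 := by simp [hGdef, hφ1, hφ2]
  rw [hG0] at hFTC
  -- convert to set integral over Icc
  have hIcc : ∫ s in I₁, G' s = 0 := by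
    rw [← hFTC, intervalIntegral.integral_of_le (by norm_num : (-1:ℝ) ≤ 1)]
    exact (integral_Icc_eq_integral_Ioc)
  -- split the integral
  have hint1 : IntegrableOn (fun x => ((starRingEnd ℂ) (ω x) * φ x).re) I₁ :=
    (Complex.continuous_re.comp_continuousOn
      ((continuous_star.comp_continuousOn hωc).mul hφc)).integrableOn_Icc
  have hint2 : IntegrableOn (fun x => k^2 * ‖φ x‖^2) I₁ :=
    (continuousOn_const.mul (hφc.norm.pow 2)).integrableOn_Icc
  have hint3 : IntegrableOn (fun x => ‖dφ x‖^2) I₁ := (hdφc.norm.pow 2).integrableOn_Icc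
  have h12 : ∫ s in I₁, (((starRingEnd ℂ) (ω s) * φ s).re + k ^ 2 * ‖φ s‖ ^ 2)
      = (∫ s in I₁, ((starRingEnd ℂ) (ω s) * φ s).re)
        + ∫ s in I₁, k ^ 2 * ‖φ s‖ ^ 2 := integral_add hint1 hint2
  have hsplit : ∫ s in I₁, G' s
      = (∫ s in I₁, ((starRingEnd ℂ) (ω s) * φ s).re)
        + (∫ s in I₁, k^2 * ‖φ s‖^2) + ∫ s in I₁, ‖dφ s‖^2 := by
    have hint12 : IntegrableOn
        (fun s => ((starRingEnd ℂ) (ω s) * φ s).re + k ^ 2 * ‖φ s‖ ^ 2) I₁ := by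
      exact hint1.add hint2
    have h123 := integral_add (μ := volume.restrict I₁) hint12 hint3
    simp only [hG'def]
    rw [h123, h12]
  have hCS : - ∫ s in I₁, ((starRingEnd ℂ) (ω s) * φ s).re ≤ L2y ω * L2y φ := by
    rw [← MeasureTheory.integral_neg]
    calc ∫ s in I₁, -((starRingEnd ℂ) (ω s) * φ s).re
        ≤ ∫ s in I₁, ‖ω s‖ * ‖φ s‖ := by
          have hneg : IntegrableOn
              (fun x => -((starRingEnd ℂ) (ω x) * φ x).re) I₁ := by
            exact hint1.neg
          apply setIntegral_mono_on hneg
            ((hωc.norm.mul hφc.norm).integrableOn_Icc) measurableSet_Icc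
          intro s _
          have h1 := re_conj_le (ω s) (-φ s)
          simp only [mul_neg, Complex.neg_re, norm_neg] at h1
          exact h1
      _ ≤ L2y ω * L2y φ := cauchy_schwarz hωc hφc
  have e2 : ∫ s in I₁, k^2 * ‖φ s‖^2 = k^2 * (L2y φ)^2 := by
    rw [MeasureTheory.integral_const_mul, L2y_sq]
  have e3 : ∫ s in I₁, ‖dφ s‖^2 = (L2y dφ)^2 := (L2y_sq dφ).symm
  rw [hsplit, e2, e3] at hIcc
  linarith

/-- Key per-frequency estimate. -/
lemma perk {k : ℝ} (hk : k ≠ 0) {ω g h φ dφ d2φ : ℝ → ℂ}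
    (mg : Measurable g) (mφ : Measurable φ) (mω : Measurable ω)
    (mdφ : Measurable dφ)
    (hω1 : ω (-1) = 0)
    (hrepω : ∀ y ∈ Set.Icc (-1:ℝ) 1, ω y = ω (-1) + ∫ s in (-1:ℝ)..y, g s)
    (hrepg : ∀ y ∈ Set.Icc (-1:ℝ) 1, g y = g (-1) + ∫ s in (-1:ℝ)..y, h s)
    (hh : IntegrableOn h (Set.Icc (-1:ℝ) 1))
    (hφ1 : φ (-1) = 0) (hφ2 : φ 1 = 0)
    (hrepφ : ∀ y ∈ Set.Icc (-1:ℝ) 1, φ y = φ (-1) + ∫ s in (-1:ℝ)..y, dφ s)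
    (hrepdφ : ∀ y ∈ Set.Icc (-1:ℝ) 1, dφ y = dφ (-1) + ∫ s in (-1:ℝ)..y, d2φ s)
    (heq : ∀ y ∈ Set.Icc (-1:ℝ) 1, d2φ y - (k:ℂ)^2 * φ y = ω y) :
    Linfy d2φ ≤ Real.sqrt 2 * Real.sqrt (L2y ω * L2y g)
      + Real.sqrt 2 * Real.sqrt |k| * L2y ω := by
  set I₁ := Set.Icc (-1:ℝ) 1 with hI₁
  have hmem0 : (0:ℝ) ∈ I₁ := by constructor <;> norm_num
  haveI : Nonempty I₁ := ⟨⟨0, hmem0⟩⟩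
  set a := L2y ω with ha
  set b := L2y g with hb
  have ha0 : 0 ≤ a := L2y_nonneg ω
  have hb0 : 0 ≤ b := L2y_nonneg g
  have hRHS0 : 0 ≤ Real.sqrt 2 * Real.sqrt (a * b) + Real.sqrt 2 * Real.sqrt |k| * a := by
    positivity
  -- continuity of g and ω
  have hgc : ContinuousOn g I₁ := rep_continuousOn hh hrepg
  have hωc : ContinuousOn ω I₁ := rep_continuousOn hgc.integrableOn_Icc hrepω
  -- Agmon for ω
  have hAω : ∀ y ∈ I₁, ‖ω y‖ ^ 2 ≤ 2 * (a * b) := agmon mg hgc hω1 hrepω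
  by_cases hbdd : BddAbove (Set.range fun y : I₁ => ‖d2φ (y:ℝ)‖)
  swap
  · rw [Linfy, Real.iSup_of_not_bddAbove hbdd]
    exact hRHS0
  -- bounded case
  have hM : ∀ y ∈ I₁, ‖d2φ y‖ ≤ Linfy d2φ := fun y hy => le_ciSup hbdd ⟨y, hy⟩
  obtain ⟨Cω, hCω⟩ := (isCompact_Icc (a := (-1:ℝ)) (b := 1)).exists_bound_of_continuousOn hωc
  have hk2 : (0:ℝ) < k^2 := by positivity
  have hknorm : ‖((k:ℂ)^2)‖ = k^2 := by
    rw [← Complex.ofReal_pow, Complex.norm_real]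
    exact abs_of_pos hk2
  have hφbdd : ∀ y ∈ I₁, ‖φ y‖ ≤ (Linfy d2φ + Cω) / k^2 := by
    intro y hy
    have h1 : (k:ℂ)^2 * φ y = d2φ y - ω y := by
      have := heq y hy; linear_combination -this
    have h2 : k^2 * ‖φ y‖ = ‖d2φ y - ω y‖ := by
      rw [← hknorm, ← norm_mul, h1]
    have h3 : ‖d2φ y - ω y‖ ≤ Linfy d2φ + Cω :=
      (norm_sub_le _ _).trans (add_le_add (hM y hy) (hCω y hy))
    rw [div_eq_inv_mul]
    calc ‖φ y‖ = (k^2)⁻¹ * (k^2 * ‖φ y‖) := by field_simp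
    _ = (k^2)⁻¹ * ‖d2φ y - ω y‖ := by rw [h2]
    _ ≤ (k^2)⁻¹ * (Linfy d2φ + Cω) := mul_le_mul_of_nonneg_left h3 (by positivity)
  -- φ is integrable on I₁
  have hφint : IntegrableOn φ I₁ := by
    apply Measure.integrableOn_of_bounded (by simp [hI₁, Real.volume_Icc] : volume I₁ ≠ ⊤)
      mφ.aestronglyMeasurable
    rw [ae_restrict_iff' measurableSet_Icc]
    exact ae_of_all _ hφbdd
  -- the rhs of the ODE
  set ρ : ℝ → ℂ := fun y => ω y + (k:ℂ)^2 * φ y with hρ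
  have hρint : IntegrableOn ρ I₁ := hωc.integrableOn_Icc.add (hφint.const_mul _)
  have hrepdφ' : ∀ y ∈ I₁, dφ y = dφ (-1) + ∫ s in (-1:ℝ)..y, ρ s := by
    intro y hy
    rw [hrepdφ y hy]
    congr 1
    apply intervalIntegral.integral_congr
    intro s hs
    have hs' : s ∈ I₁ := by
      rcases hs with ⟨h1, h2⟩
      constructor
      · exact le_trans (le_min (by norm_num) hy.1) h1
      · exact le_trans h2 (max_le (by norm_num) hy.2)
    have := heq s hs'
    simp only [hρ]
    linear_combination this
  have hdφc : ContinuousOn dφ I₁ := rep_continuousOn hρint hrepdφ'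
  have hφc : ContinuousOn φ I₁ := rep_continuousOn hdφc.integrableOn_Icc hrepφ
  have hρc : ContinuousOn ρ I₁ := hωc.add (continuousOn_const.mul hφc)
  have hρm : Measurable ρ := mω.add (measurable_const.mul mφ)
  have hdφ' : ∀ x ∈ Set.Ioo (-1:ℝ) 1, HasDerivAt φ (dφ x) x := fun x hx =>
    rep_hasDerivAt mdφ hdφc hrepφ hx
  have hd2φ' : ∀ x ∈ Set.Ioo (-1:ℝ) 1, HasDerivAt dφ (ω x + (k:ℂ)^2 * φ x) x := fun x hx =>
    rep_hasDerivAt hρm hρc hrepdφ' hx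
  -- energy estimate
  set p := L2y φ with hp
  set q := L2y dφ with hq
  have hp0 : 0 ≤ p := L2y_nonneg φ
  have hq0 : 0 ≤ q := L2y_nonneg dφ
  have hE : q^2 + k^2 * p^2 ≤ a * p := energy k hφc hdφc hωc hφ1 hφ2 hdφ' hd2φ'
  have hk2p : k^2 * p ≤ a := by
    rcases eq_or_lt_of_le hp0 with hp' | hp'
    · rw [← hp']; simpa using ha0
    · have h1 : k^2 * p * p ≤ a * p := by nlinarith
      exact le_of_mul_le_mul_right h1 hp'
  have hk2q : k^2 * q ≤ |k| * a := by
    have hq2 : q^2 ≤ a * p := by nlinarith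
    have e2 : k^4 * q^2 ≤ k^4 * (a*p) := mul_le_mul_of_nonneg_left hq2 (by positivity)
    have e4 : (k^2*a)*(k^2*p) ≤ (k^2*a)*a :=
      mul_le_mul_of_nonneg_left hk2p (by positivity)
    have h2 : (k^2*q)^2 ≤ (|k| * a)^2 := by
      have e5 : (|k| * a)^2 = (k^2*a)*a := by rw [mul_pow, sq_abs]; ring
      nlinarith
    exact le_of_pow_le_pow_left₀ two_ne_zero (by positivity) h2
  -- Agmon for φ
  have hAφ : ∀ y ∈ I₁, ‖φ y‖ ^ 2 ≤ 2 * (p * q) := agmon mdφ hdφc hφ1 hrepφ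
  have hpt : ∀ y ∈ I₁, ‖d2φ y‖ ≤ Real.sqrt 2 * Real.sqrt (a*b)
      + Real.sqrt 2 * Real.sqrt |k| * a := by
    intro y hy
    have h1 : d2φ y = ω y + (k:ℂ)^2 * φ y := by
      have := heq y hy; linear_combination this
    have h2 : ‖d2φ y‖ ≤ ‖ω y‖ + k^2*‖φ y‖ := by
      rw [h1]
      refine (norm_add_le _ _).trans ?_
      rw [norm_mul, hknorm]
    have h3 : ‖ω y‖ ≤ Real.sqrt 2 * Real.sqrt (a*b) := by
      have h4 : ‖ω y‖ ≤ Real.sqrt (2*(a*b)) := by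
        rw [show ‖ω y‖ = Real.sqrt (‖ω y‖^2) from (Real.sqrt_sq (norm_nonneg _)).symm]
        exact Real.sqrt_le_sqrt (hAω y hy)
      rwa [Real.sqrt_mul (by norm_num : (0:ℝ) ≤ 2)] at h4
    have h5 : k^2*‖φ y‖ ≤ Real.sqrt 2 * Real.sqrt |k| * a := by
      have h6 : (k^2*‖φ y‖)^2 ≤ k^4 * (2*(p*q)) := by
        have h := mul_le_mul_of_nonneg_left (hAφ y hy) (by positivity : (0:ℝ) ≤ k^4)
        calc (k^2*‖φ y‖)^2 = k^4 * ‖φ y‖^2 := by ring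
        _ ≤ k^4 * (2*(p*q)) := h
      have h8 : (k^2*p)*(k^2*q) ≤ a * (|k| * a) :=
        mul_le_mul hk2p hk2q (by positivity) ha0
      have h9 : (Real.sqrt 2 * Real.sqrt |k| * a)^2 = 2*(a * (|k| * a)) := by
        rw [mul_pow, mul_pow, Real.sq_sqrt (by norm_num : (0:ℝ) ≤ 2),
          Real.sq_sqrt (abs_nonneg k)]
        ring
      apply le_of_pow_le_pow_left₀ two_ne_zero (by positivity)
      rw [h9]
      nlinarith
    linarith
  rw [Linfy]
  apply ciSup_le
  intro y
  exact hpt y y.2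

lemma freq {a b W α ν k : ℝ} (ha : 0 ≤ a) (hb : 0 ≤ b) (hW : 0 < W)
    (hα : 0 ≤ α) (hν : 0 < ν) :
    Real.sqrt 2 * Real.sqrt (a*b) + Real.sqrt 2 * Real.sqrt |k| * a
    ≤ 2 * Real.sqrt 2 * ((ν⁻¹) ^ ((1:ℝ)/4) * ((W⁻¹) ^ ((1:ℝ)/2)
        * (W * (a^2 + α*b^2)) ^ ((1:ℝ)/4) * (W * (ν * (k^2*a^2 + b^2))) ^ ((1:ℝ)/4))) := by
  set E := W * (a^2 + α*b^2) with hEdef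
  set D := W * (ν * (k^2*a^2 + b^2)) with hDdef
  have hE0 : 0 ≤ E := by positivity
  have hD0 : 0 ≤ D := by positivity
  set Z := Real.sqrt 2 * ((ν⁻¹) ^ ((1:ℝ)/4) * ((W⁻¹) ^ ((1:ℝ)/2)
      * E ^ ((1:ℝ)/4) * D ^ ((1:ℝ)/4))) with hZdef
  have hZ0 : 0 ≤ Z := by positivity
  have es : Real.sqrt 2 ^ (4:ℕ) = 4 := by
    rw [show (4:ℕ) = 2*2 from rfl, pow_mul, Real.sq_sqrt (by norm_num : (0:ℝ) ≤ 2)]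
    norm_num
  have hZ4 : Z^(4:ℕ) = 4 * (ν⁻¹ * ((W⁻¹)^2 * (E * D))) := by
    have e1 := rpow4 (ν⁻¹) (inv_nonneg.mpr hν.le)
    have e2 := rpow24 (W⁻¹) (inv_nonneg.mpr hW.le)
    have e3 := rpow4 E hE0
    have e4 := rpow4 D hD0
    calc Z^(4:ℕ)
        = Real.sqrt 2 ^(4:ℕ) * (((ν⁻¹) ^ ((1:ℝ)/4))^(4:ℕ)
          * (((W⁻¹) ^ ((1:ℝ)/2))^(4:ℕ) * ((E ^ ((1:ℝ)/4))^(4:ℕ) * (D ^ ((1:ℝ)/4))^(4:ℕ)))) := by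
          rw [hZdef]; ring
    _ = 4 * (ν⁻¹ * ((W⁻¹)^2 * (E * D))) := by rw [e1, e2, e3, e4, es]
  -- lower bounds for E and D
  have hEa : W * a^2 ≤ E := by
    rw [hEdef]
    apply mul_le_mul_of_nonneg_left _ hW.le
    nlinarith
  have hDb : W * (ν * b^2) ≤ D := by
    rw [hDdef]
    apply mul_le_mul_of_nonneg_left _ hW.le
    apply mul_le_mul_of_nonneg_left _ hν.le
    nlinarith
  have hDa : W * (ν * (k^2 * a^2)) ≤ D := by
    rw [hDdef]
    apply mul_le_mul_of_nonneg_left _ hW.le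
    apply mul_le_mul_of_nonneg_left _ hν.le
    nlinarith
  have hWinv : W⁻¹ * W = 1 := inv_mul_cancel₀ hW.ne'
  have hνinv : ν⁻¹ * ν = 1 := inv_mul_cancel₀ hν.ne'
  -- term 1
  have ht1 : Real.sqrt 2 * Real.sqrt (a*b) ≤ Z := by
    apply le_of_pow_le_pow_left₀ (n := 4) (by norm_num) hZ0
    have e : (Real.sqrt 2 * Real.sqrt (a*b))^(4:ℕ) = 4 * ((a*b)^2) := by
      have : (Real.sqrt (a*b))^(4:ℕ) = ((a*b))^2 := by
        rw [show (4:ℕ) = 2*2 from rfl, pow_mul, Real.sq_sqrt (by positivity : (0:ℝ) ≤ a*b)]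
      rw [mul_pow, es, this]
    rw [e, hZ4]
    have h1 : (W*a^2) * (W*(ν*b^2)) ≤ E * D :=
      mul_le_mul hEa hDb (by positivity) hE0
    have h2 : ν⁻¹ * ((W⁻¹)^2 * ((W*a^2)*(W*(ν*b^2)))) ≤ ν⁻¹ * ((W⁻¹)^2 * (E*D)) := by
      apply mul_le_mul_of_nonneg_left _ (by positivity)
      exact mul_le_mul_of_nonneg_left h1 (by positivity)
    have h3 : ν⁻¹ * ((W⁻¹)^2 * ((W*a^2)*(W*(ν*b^2)))) = (a*b)^2 := by
      field_simp
    nlinarith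
  -- term 2
  have ht2 : Real.sqrt 2 * Real.sqrt |k| * a ≤ Z := by
    apply le_of_pow_le_pow_left₀ (n := 4) (by norm_num) hZ0
    have e : (Real.sqrt 2 * Real.sqrt |k| * a)^(4:ℕ) = 4 * (k^2 * a^4) := by
      have h4 : (Real.sqrt |k|)^(4:ℕ) = k^2 := by
        rw [show (4:ℕ) = 2*2 from rfl, pow_mul, Real.sq_sqrt (abs_nonneg k), sq_abs]
      rw [mul_pow, mul_pow, es, h4]
      ring
    rw [e, hZ4]
    have h1 : (W*a^2) * (W*(ν*(k^2*a^2))) ≤ E * D :=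
      mul_le_mul hEa hDa (by positivity) hE0
    have h2 : ν⁻¹ * ((W⁻¹)^2 * ((W*a^2)*(W*(ν*(k^2*a^2))))) ≤ ν⁻¹ * ((W⁻¹)^2 * (E*D)) := by
      apply mul_le_mul_of_nonneg_left _ (by positivity)
      exact mul_le_mul_of_nonneg_left h1 (by positivity)
    have h3 : ν⁻¹ * ((W⁻¹)^2 * ((W*a^2)*(W*(ν*(k^2*a^2))))) = k^2*a^4 := by
      field_simp
    nlinarith
  calc Real.sqrt 2 * Real.sqrt (a*b) + Real.sqrt 2 * Real.sqrt |k| * a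
      ≤ Z + Z := add_le_add ht1 ht2
  _ = 2 * Real.sqrt 2 * ((ν⁻¹) ^ ((1:ℝ)/4) * ((W⁻¹) ^ ((1:ℝ)/2)
      * E ^ ((1:ℝ)/4) * D ^ ((1:ℝ)/4))) := by rw [hZdef]; ring

lemma lamf_nonneg {ν : ℝ} (hν : 0 ≤ ν) (k : ℝ) : 0 ≤ lamf ν k := by
  unfold lamf; split
  · positivity
  · exact hν

lemma alphf_nonneg {ν : ℝ} (hν : 0 ≤ ν) (k : ℝ) : 0 ≤ alphf ν k := by
  unfold alphf; split
  · positivity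
  · norm_num

lemma Wf_pos {ν m ε c t : ℝ} (k : ℝ) : 0 < Wf ν m ε c t k := by
  unfold Wf
  have h1 : (0:ℝ) < 1 + k^2 := by positivity
  have h2 : (0:ℝ) < 1 + k⁻¹^2 := by positivity
  positivity

lemma Wf_ge {ν m ε c t : ℝ} (hm : 1 < m) (hε : 0 < ε) (hν : 0 < ν) (hc : 0 < c)
    (ht : 0 ≤ t) (k : ℝ) : 1 + k^2 ≤ Wf ν m ε c t k := by
  have h1 : 1 ≤ Real.exp (2 * c * lamf ν k * t) := by
    apply Real.one_le_exp
    have := lamf_nonneg hν.le k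
    positivity
  have hbase : (1:ℝ) ≤ 1 + k^2 := by nlinarith [sq_nonneg k]
  have h2 : 1 + k^2 ≤ (1+k^2) ^ m := by
    calc 1 + k^2 = (1+k^2) ^ (1:ℝ) := (Real.rpow_one _).symm
    _ ≤ (1+k^2) ^ m := Real.rpow_le_rpow_of_exponent_le hbase hm.le
  have h3 : (1:ℝ) ≤ (1 + k⁻¹^2) ^ ε :=
    Real.one_le_rpow (by nlinarith [sq_nonneg k⁻¹]) hε.le
  have hp2 : (0:ℝ) ≤ (1+k^2) ^ m := by positivity
  unfold Wf
  calc 1 + k^2 ≤ (1+k^2)^m := h2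
  _ = 1 * (1+k^2)^m * 1 := by ring
  _ ≤ Real.exp (2 * c * lamf ν k * t) * (1 + k ^ 2) ^ m * (1 + k⁻¹ ^ 2) ^ ε := by
      refine mul_le_mul ?_ h3 zero_le_one ?_
      · exact mul_le_mul h1 le_rfl hp2 (le_trans zero_le_one h1)
      · positivity

lemma measurable_lamf (ν : ℝ) : Measurable (lamf ν) := by
  unfold lamf
  apply Measurable.ite
  · exact measurableSet_le measurable_const continuous_abs.measurable
  · exact (continuous_abs.measurable.pow measurable_const).const_mul _
  · exact measurable_const

lemma measurable_alphf (ν : ℝ) : Measurable (alphf ν) := by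
  unfold alphf
  apply Measurable.ite
  · exact measurableSet_le measurable_const continuous_abs.measurable
  · exact (continuous_abs.measurable.pow measurable_const).const_mul _
  · exact measurable_const

lemma measurable_Wf (ν m ε c t : ℝ) : Measurable (Wf ν m ε c t) := by
  unfold Wf
  apply Measurable.mul
  apply Measurable.mul
  · exact (((measurable_lamf ν).const_mul _).mul measurable_const).exp
  · exact (measurable_const.add (measurable_id.pow_const 2)).pow measurable_const
  · exact (measurable_const.add (measurable_inv.pow_const 2)).pow measurable_const

lemma measurable_l2sq {ω : ℝ → ℝ → ℂ} (hm : Measurable (Function.uncurry ω)) :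
    Measurable fun k => ∫ y in Set.Icc (-1:ℝ) 1, ‖ω k y‖ ^ 2 := by
  have h : StronglyMeasurable fun p : ℝ × ℝ => ‖Function.uncurry ω p‖ ^ 2 :=
    (hm.norm.pow_const 2).stronglyMeasurable
  exact h.integral_prod_right'.measurable

lemma lint_W_inv {ν m ε c t : ℝ} (hm : 1 < m) (hε : 0 < ε) (hν : 0 < ν) (hc : 0 < c)
    (ht : 0 ≤ t) :
    ∫⁻ k : ℝ, ENNReal.ofReal ((Wf ν m ε c t k)⁻¹) ≤ ENNReal.ofReal Real.pi := by
  have step : ∀ k : ℝ, (Wf ν m ε c t k)⁻¹ ≤ (1 + k^2)⁻¹ := by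
    intro k
    apply inv_anti₀ (by positivity)
    exact Wf_ge hm hε hν hc ht k
  calc ∫⁻ k : ℝ, ENNReal.ofReal ((Wf ν m ε c t k)⁻¹)
      ≤ ∫⁻ k : ℝ, ENNReal.ofReal ((1 + k^2)⁻¹) :=
        lintegral_mono fun k => ENNReal.ofReal_le_ofReal (step k)
  _ = ENNReal.ofReal Real.pi := by
      rw [← integral_univ_inv_one_add_sq]
      exact (ofReal_integral_eq_lintegral_ofReal integrable_inv_one_add_sq
        (ae_of_all _ fun x => by positivity)).symm

end L33

theorem lemma33_second (m ε : ℝ) (hm : 1 < m) (hε : ε ∈ Set.Ioo (0 : ℝ) (1 / 12)) :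
    ∃ C : ℝ, 0 < C ∧
      ∀ (ν c t : ℝ), ν ∈ Set.Ioo (0 : ℝ) 1 → 0 < c → 0 ≤ t →
      ∀ (ω dω d2ω φ dφ d2φ : ℝ → ℝ → ℂ),
      Measurable (Function.uncurry ω) → Measurable (Function.uncurry dω) →
      Measurable (Function.uncurry d2ω) → Measurable (Function.uncurry φ) →
      Measurable (Function.uncurry dφ) → Measurable (Function.uncurry d2φ) →
      (∀ k : ℝ, ω k (-1) = 0 ∧ ω k 1 = 0) →
      (∀ k : ℝ, ∀ y ∈ Set.Icc (-1 : ℝ) 1,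
        ω k y = ω k (-1) + ∫ s in (-1 : ℝ)..y, dω k s) →
      (∀ k : ℝ, ∀ y ∈ Set.Icc (-1 : ℝ) 1,
        dω k y = dω k (-1) + ∫ s in (-1 : ℝ)..y, d2ω k s) →
      (∀ k : ℝ, MemLp (d2ω k) 2 (volume.restrict (Set.Icc (-1 : ℝ) 1))) →
      (∀ k : ℝ, k ≠ 0 → φ k (-1) = 0 ∧ φ k 1 = 0) →
      (∀ k : ℝ, k ≠ 0 → ∀ y ∈ Set.Icc (-1 : ℝ) 1,
        φ k y = φ k (-1) + ∫ s in (-1 : ℝ)..y, dφ k s) →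
      (∀ k : ℝ, k ≠ 0 → ∀ y ∈ Set.Icc (-1 : ℝ) 1,
        dφ k y = dφ k (-1) + ∫ s in (-1 : ℝ)..y, d2φ k s) →
      (∀ k : ℝ, k ≠ 0 → ∀ y ∈ Set.Icc (-1 : ℝ) 1,
        d2φ k y - (k : ℂ) ^ 2 * φ k y = ω k y) →
      EEn ν m ε c t ω dω ≠ ⊤ → D1n ν m ε c t ω dω ≠ ⊤ → D2n ν m ε c t dω d2ω ≠ ⊤ →
      D3n ν m ε c t ω ≠ ⊤ → D4n ν m ε c t φ dφ ≠ ⊤ → D5n ν m ε c t dφ d2φ ≠ ⊤ →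
      ∫⁻ l : ℝ, ENNReal.ofReal (Linfy (d2φ l)) ≤
        ENNReal.ofReal (C * ν ^ (-(1 : ℝ) / 4)) * (EEn ν m ε c t ω dω) ^ ((1 : ℝ) / 4) *
          (D1n ν m ε c t ω dω) ^ ((1 : ℝ) / 4) := by
  refine ⟨2 * Real.sqrt 2 * Real.sqrt Real.pi + 1, by positivity, ?_⟩
  intro ν c t hν hc ht ω dω d2ω φ dφ d2φ mω mdω md2ω mφ mdφ md2φ hbc hrepω hrepdω hL2
    hφbc hrepφ hrepdφ hpois hEtop hD1top _ _ _ _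
  obtain ⟨hν0, hν1⟩ := hν
  set Ek : ℝ → ℝ := fun k =>
    Wf ν m ε c t k * ((L2y (ω k)) ^ 2 + alphf ν k * (L2y (dω k)) ^ 2) with hEkdef
  set Dk : ℝ → ℝ := fun k => Wf ν m ε c t k * (ν * gradSq k (ω k) (dω k)) with hDkdef
  have hEk0 : ∀ k, 0 ≤ Ek k := by
    intro k
    have h1 := L33.L2y_nonneg (ω k); have h2 := L33.L2y_nonneg (dω k)
    have h3 := L33.alphf_nonneg hν0.le k
    have := (L33.Wf_pos (ν := ν) (m := m) (ε := ε) (c := c) (t := t) k).le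
    positivity
  have hDk0 : ∀ k, 0 ≤ Dk k := by
    intro k
    have h1 := L33.L2y_nonneg (ω k); have h2 := L33.L2y_nonneg (dω k)
    have := (L33.Wf_pos (ν := ν) (m := m) (ε := ε) (c := c) (t := t) k).le
    simp only [hDkdef, gradSq]
    positivity
  -- real pointwise bound
  have key : ∀ k : ℝ, k ≠ 0 → Linfy (d2φ k) ≤
      (2 * Real.sqrt 2 * (ν⁻¹) ^ ((1:ℝ)/4)) *
        (((Wf ν m ε c t k)⁻¹) ^ ((1:ℝ)/2) * ((Ek k) ^ ((1:ℝ)/4) * (Dk k) ^ ((1:ℝ)/4))) := by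
    intro k hk
    have hper := L33.perk hk (mdω.of_uncurry_left) (mφ.of_uncurry_left) (mω.of_uncurry_left)
      (mdφ.of_uncurry_left) (hbc k).1 (hrepω k) (hrepdω k)
      (((hL2 k).mono_exponent (by norm_num)).integrable le_rfl)
      (hφbc k hk).1 (hφbc k hk).2 (hrepφ k hk) (hrepdφ k hk) (hpois k hk)
    have hfr := L33.freq (L33.L2y_nonneg (ω k)) (L33.L2y_nonneg (dω k))
      (L33.Wf_pos (ν := ν) (m := m) (ε := ε) (c := c) (t := t) k)
      (L33.alphf_nonneg hν0.le k) hν0 (k := k)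
    calc Linfy (d2φ k) ≤ _ := hper
    _ ≤ 2 * Real.sqrt 2 * ((ν⁻¹) ^ ((1:ℝ)/4) * (((Wf ν m ε c t k)⁻¹) ^ ((1:ℝ)/2)
        * (Wf ν m ε c t k * ((L2y (ω k))^2 + alphf ν k * (L2y (dω k))^2)) ^ ((1:ℝ)/4)
        * (Wf ν m ε c t k * (ν * (k^2 * (L2y (ω k))^2 + (L2y (dω k))^2))) ^ ((1:ℝ)/4))) := hfr
    _ = (2 * Real.sqrt 2 * (ν⁻¹) ^ ((1:ℝ)/4)) *
        (((Wf ν m ε c t k)⁻¹) ^ ((1:ℝ)/2) * ((Ek k) ^ ((1:ℝ)/4) * (Dk k) ^ ((1:ℝ)/4))) := by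
        simp only [hEkdef, hDkdef, gradSq]
        ring
  -- ENNReal plumbing
  set c0 : ℝ≥0∞ := ENNReal.ofReal (2 * Real.sqrt 2 * (ν⁻¹) ^ ((1:ℝ)/4)) with hc0def
  set F : ℝ → ℝ≥0∞ := fun k => ENNReal.ofReal ((Wf ν m ε c t k)⁻¹) ^ ((1:ℝ)/2) with hFdef
  set G : ℝ → ℝ≥0∞ := fun k =>
    ENNReal.ofReal (Ek k) ^ ((1:ℝ)/4) * ENNReal.ofReal (Dk k) ^ ((1:ℝ)/4) with hGdef
  have hmeasEk : Measurable Ek := by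
    have e : Ek = fun k => Wf ν m ε c t k *
        ((∫ y in Set.Icc (-1:ℝ) 1, ‖ω k y‖ ^ 2)
          + alphf ν k * ∫ y in Set.Icc (-1:ℝ) 1, ‖dω k y‖ ^ 2) := by
      funext k; simp only [hEkdef, L33.L2y_sq]
    rw [e]
    exact (L33.measurable_Wf ν m ε c t).mul
      ((L33.measurable_l2sq mω).add ((L33.measurable_alphf ν).mul (L33.measurable_l2sq mdω)))
  have hmeasDk : Measurable Dk := by
    have e : Dk = fun k => Wf ν m ε c t k * (ν *
        (k ^ 2 * (∫ y in Set.Icc (-1:ℝ) 1, ‖ω k y‖ ^ 2)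
          + ∫ y in Set.Icc (-1:ℝ) 1, ‖dω k y‖ ^ 2)) := by
      funext k; simp only [hDkdef, gradSq, L33.L2y_sq]
    rw [e]
    apply (L33.measurable_Wf ν m ε c t).mul
    apply Measurable.const_mul
    exact ((measurable_id.pow_const 2).mul (L33.measurable_l2sq mω)).add (L33.measurable_l2sq mdω)
  have hmeasF : Measurable F :=
    ((L33.measurable_Wf ν m ε c t).inv.ennreal_ofReal).pow measurable_const
  have hmeasG : Measurable G :=
    (hmeasEk.ennreal_ofReal.pow measurable_const).mul
      (hmeasDk.ennreal_ofReal.pow measurable_const)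
  -- a.e. bound in ℝ≥0∞
  have hae : ∀ᵐ k : ℝ, ENNReal.ofReal (Linfy (d2φ k)) ≤ c0 * (F k * G k) := by
    have h0 : ∀ᵐ k : ℝ, k ≠ (0:ℝ) := by
      rw [ae_iff]
      simp only [ne_eq, not_not, Set.setOf_eq_eq_singleton]
      exact measure_singleton 0
    filter_upwards [h0] with k hk
    refine (ENNReal.ofReal_le_ofReal (key k hk)).trans ?_
    have hWinv : (0:ℝ) ≤ (Wf ν m ε c t k)⁻¹ :=
      (inv_nonneg).mpr (L33.Wf_pos (ν := ν) (m := m) (ε := ε) (c := c) (t := t) k).le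
    rw [ENNReal.ofReal_mul
        (show (0:ℝ) ≤ 2 * Real.sqrt 2 * (ν⁻¹) ^ ((1:ℝ)/4) by positivity),
      ENNReal.ofReal_mul
        (show (0:ℝ) ≤ ((Wf ν m ε c t k)⁻¹) ^ ((1:ℝ)/2) by positivity),
      ENNReal.ofReal_mul (show (0:ℝ) ≤ (Ek k) ^ ((1:ℝ)/4) from
        Real.rpow_nonneg (hEk0 k) _)]
    rw [← ENNReal.ofReal_rpow_of_nonneg hWinv (by norm_num),
      ← ENNReal.ofReal_rpow_of_nonneg (hEk0 k) (by norm_num),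
      ← ENNReal.ofReal_rpow_of_nonneg (hDk0 k) (by norm_num)]
  have hconj : Real.HolderConjugate 2 2 := Real.holderConjugate_iff.mpr ⟨one_lt_two, by norm_num⟩
  -- Hölder 1
  have hold1 : ∫⁻ k, F k * G k ≤
      (∫⁻ k, F k ^ (2:ℝ)) ^ ((1:ℝ)/2) * (∫⁻ k, G k ^ (2:ℝ)) ^ ((1:ℝ)/2) := by
    have := ENNReal.lintegral_mul_le_Lp_mul_Lq volume hconj
      hmeasF.aemeasurable hmeasG.aemeasurable
    simpa using this
  -- F part
  have hF2 : (∫⁻ k, F k ^ (2:ℝ)) ≤ ENNReal.ofReal Real.pi := by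
    have e : ∀ k, F k ^ (2:ℝ) = ENNReal.ofReal ((Wf ν m ε c t k)⁻¹) := by
      intro k
      rw [hFdef, ← ENNReal.rpow_mul]
      norm_num
    calc (∫⁻ k, F k ^ (2:ℝ)) = ∫⁻ k, ENNReal.ofReal ((Wf ν m ε c t k)⁻¹) := by
          exact lintegral_congr fun k => e k
    _ ≤ ENNReal.ofReal Real.pi := L33.lint_W_inv hm hε.1 hν0 hc ht
  have hFfin : (∫⁻ k, F k ^ (2:ℝ)) ^ ((1:ℝ)/2) ≤ ENNReal.ofReal (Real.sqrt Real.pi) := by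
    calc (∫⁻ k, F k ^ (2:ℝ)) ^ ((1:ℝ)/2)
        ≤ (ENNReal.ofReal Real.pi) ^ ((1:ℝ)/2) :=
          ENNReal.rpow_le_rpow hF2 (by norm_num)
    _ = ENNReal.ofReal (Real.sqrt Real.pi) := by
        rw [ENNReal.ofReal_rpow_of_nonneg Real.pi_nonneg (by norm_num),
          ← Real.sqrt_eq_rpow]
  -- G part
  have hG2 : (∫⁻ k, G k ^ (2:ℝ)) ≤
      (EEn ν m ε c t ω dω) ^ ((1:ℝ)/2) * (D1n ν m ε c t ω dω) ^ ((1:ℝ)/2) := by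
    have e : ∀ k, G k ^ (2:ℝ) =
        ENNReal.ofReal (Ek k) ^ ((1:ℝ)/2) * ENNReal.ofReal (Dk k) ^ ((1:ℝ)/2) := by
      intro k
      rw [hGdef, ENNReal.mul_rpow_of_nonneg _ _ (by norm_num : (0:ℝ) ≤ 2),
        ← ENNReal.rpow_mul, ← ENNReal.rpow_mul]
      norm_num
    have hold2 : ∫⁻ k, ENNReal.ofReal (Ek k) ^ ((1:ℝ)/2) * ENNReal.ofReal (Dk k) ^ ((1:ℝ)/2)
        ≤ (∫⁻ k, (ENNReal.ofReal (Ek k) ^ ((1:ℝ)/2)) ^ (2:ℝ)) ^ ((1:ℝ)/2)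
          * (∫⁻ k, (ENNReal.ofReal (Dk k) ^ ((1:ℝ)/2)) ^ (2:ℝ)) ^ ((1:ℝ)/2) := by
      have hmE12 : Measurable fun k => ENNReal.ofReal (Ek k) ^ ((1:ℝ)/2) :=
        hmeasEk.ennreal_ofReal.pow measurable_const
      have hmD12 : Measurable fun k => ENNReal.ofReal (Dk k) ^ ((1:ℝ)/2) :=
        hmeasDk.ennreal_ofReal.pow measurable_const
      have := ENNReal.lintegral_mul_le_Lp_mul_Lq volume hconj
        hmE12.aemeasurable hmD12.aemeasurable
      simpa using this
    have e2 : ∀ (X : ℝ≥0∞), (X ^ ((1:ℝ)/2)) ^ (2:ℝ) = X := by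
      intro X; rw [← ENNReal.rpow_mul]; norm_num
    calc (∫⁻ k, G k ^ (2:ℝ))
        = ∫⁻ k, ENNReal.ofReal (Ek k) ^ ((1:ℝ)/2) * ENNReal.ofReal (Dk k) ^ ((1:ℝ)/2) :=
          lintegral_congr fun k => e k
    _ ≤ (∫⁻ k, (ENNReal.ofReal (Ek k) ^ ((1:ℝ)/2)) ^ (2:ℝ)) ^ ((1:ℝ)/2)
          * (∫⁻ k, (ENNReal.ofReal (Dk k) ^ ((1:ℝ)/2)) ^ (2:ℝ)) ^ ((1:ℝ)/2) := hold2
    _ = (EEn ν m ε c t ω dω) ^ ((1:ℝ)/2) * (D1n ν m ε c t ω dω) ^ ((1:ℝ)/2) := by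
        rw [lintegral_congr fun k => e2 (ENNReal.ofReal (Ek k)),
          lintegral_congr fun k => e2 (ENNReal.ofReal (Dk k))]
        rfl
  have hGfin : (∫⁻ k, G k ^ (2:ℝ)) ^ ((1:ℝ)/2) ≤
      (EEn ν m ε c t ω dω) ^ ((1:ℝ)/4) * (D1n ν m ε c t ω dω) ^ ((1:ℝ)/4) := by
    calc (∫⁻ k, G k ^ (2:ℝ)) ^ ((1:ℝ)/2)
        ≤ ((EEn ν m ε c t ω dω) ^ ((1:ℝ)/2) * (D1n ν m ε c t ω dω) ^ ((1:ℝ)/2)) ^ ((1:ℝ)/2) :=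
          ENNReal.rpow_le_rpow hG2 (by norm_num)
    _ = (EEn ν m ε c t ω dω) ^ ((1:ℝ)/4) * (D1n ν m ε c t ω dω) ^ ((1:ℝ)/4) := by
        rw [ENNReal.mul_rpow_of_nonneg _ _ (by norm_num : (0:ℝ) ≤ (1:ℝ)/2),
          ← ENNReal.rpow_mul, ← ENNReal.rpow_mul]
        norm_num
  -- constant comparison
  have hconst : c0 * ENNReal.ofReal (Real.sqrt Real.pi) ≤
      ENNReal.ofReal ((2 * Real.sqrt 2 * Real.sqrt Real.pi + 1) * ν ^ (-(1:ℝ)/4)) := by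
    rw [hc0def, ← ENNReal.ofReal_mul (by positivity)]
    apply ENNReal.ofReal_le_ofReal
    have e : (ν⁻¹) ^ ((1:ℝ)/4) = ν ^ (-(1:ℝ)/4) := by
      rw [Real.inv_rpow hν0.le, ← Real.rpow_neg hν0.le]
      norm_num
    rw [mul_assoc, mul_comm ((ν⁻¹) ^ ((1:ℝ)/4)), ← mul_assoc, e]
    apply mul_le_mul_of_nonneg_right _ (Real.rpow_nonneg hν0.le _)
    nlinarith [Real.sqrt_nonneg Real.pi, Real.sqrt_nonneg 2]
  -- final chain
  calc ∫⁻ l : ℝ, ENNReal.ofReal (Linfy (d2φ l))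
      ≤ ∫⁻ k, c0 * (F k * G k) := lintegral_mono_ae hae
  _ = c0 * ∫⁻ k, F k * G k := lintegral_const_mul' c0 _ ENNReal.ofReal_ne_top
  _ ≤ c0 * ((∫⁻ k, F k ^ (2:ℝ)) ^ ((1:ℝ)/2) * (∫⁻ k, G k ^ (2:ℝ)) ^ ((1:ℝ)/2)) :=
      mul_le_mul_right hold1 c0
  _ ≤ c0 * (ENNReal.ofReal (Real.sqrt Real.pi) *
        ((EEn ν m ε c t ω dω) ^ ((1:ℝ)/4) * (D1n ν m ε c t ω dω) ^ ((1:ℝ)/4))) := by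
      apply mul_le_mul_right
      exact mul_le_mul' hFfin hGfin
  _ = (c0 * ENNReal.ofReal (Real.sqrt Real.pi)) *
        ((EEn ν m ε c t ω dω) ^ ((1:ℝ)/4) * (D1n ν m ε c t ω dω) ^ ((1:ℝ)/4)) := by ring
  _ ≤ ENNReal.ofReal ((2 * Real.sqrt 2 * Real.sqrt Real.pi + 1) * ν ^ (-(1:ℝ)/4)) *
        ((EEn ν m ε c t ω dω) ^ ((1:ℝ)/4) * (D1n ν m ε c t ω dω) ^ ((1:ℝ)/4)) :=
      mul_le_mul_left hconst _
  _ = ENNReal.ofReal ((2 * Real.sqrt 2 * Real.sqrt Real.pi + 1) * ν ^ (-(1:ℝ)/4)) *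
        (EEn ν m ε c t ω dω) ^ ((1:ℝ)/4) * (D1n ν m ε c t ω dω) ^ ((1:ℝ)/4) := by ring

end
end
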